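/- arXiv:1306.6182 — 5 statements merged into one kernel-verified Lean document; each statement's English description precedes it below -/
import Mathlib

section
/- For 0 < k < 1 and 0 ≤ u < K(k), one has log((1 + k·sn(u,k))/dn(u,k)) ≤ u ≤ log((1 + sn(u,k))/cn(u,k)). -/
open Real intervalIntegral

/-- Complete elliptic integral of the first kind. -/
noncomputable def ellK (k : ℝ) : ℝ :=
  ∫ θ in (0:ℝ)..(π/2), 1 / Real.sqrt (1 - k^2 * (Real.sin θ)^2)

/-- Complete elliptic integral of the second kind. -/
noncomputable def ellE (k : ℝ) : ℝ :=
  ∫ θ in (0:ℝ)..(π/2), Real.sqrt (1 - k^2 * (Real.sin θ)^2)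

set_option maxHeartbeats 1000000 in
theorem log_bounds_u (k : ℝ) (hk0 : 0 < k) (hk1 : k < 1)
    (sn cn dn : ℝ → ℝ)
    (hsn0 : sn 0 = 0) (hcn0 : cn 0 = 1) (hdn0 : dn 0 = 1)
    (hsn : ∀ u : ℝ, HasDerivAt sn (cn u * dn u) u)
    (hcn : ∀ u : ℝ, HasDerivAt cn (-(sn u * dn u)) u)
    (hdn : ∀ u : ℝ, HasDerivAt dn (-(k^2 * sn u * cn u)) u)
    (u : ℝ) (hu0 : 0 ≤ u) (hu : u < ellK k) :
    Real.log ((1 + k * sn u) / dn u) ≤ u ∧ u ≤ Real.log ((1 + sn u) / cn u) := by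
  have hid1 : ∀ t, sn t ^ 2 + cn t ^ 2 = 1 := by
    intro t
    have hD : ∀ x : ℝ, HasDerivAt (fun s => sn s ^ 2 + cn s ^ 2) 0 x := by
      intro x
      have h := ((hsn x).pow 2).add ((hcn x).pow 2)
      refine h.congr_deriv ?_
      norm_num
      ring
    have := is_const_of_deriv_eq_zero (fun x => (hD x).differentiableAt)
      (fun x => (hD x).deriv) t 0
    simpa [hsn0, hcn0] using this
  have hid2 : ∀ t, dn t ^ 2 + k^2 * sn t ^ 2 = 1 := by
    intro t
    have hD : ∀ x : ℝ, HasDerivAt (fun s => dn s ^ 2 + k^2 * sn s ^ 2) 0 x := by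
      intro x
      have h := ((hdn x).pow 2).add (((hsn x).pow 2).const_mul (k^2))
      refine h.congr_deriv ?_
      norm_num
      ring
    have := is_const_of_deriv_eq_zero (fun x => (hD x).differentiableAt)
      (fun x => (hD x).deriv) t 0
    simpa [hsn0, hdn0] using this
  have hdnne : ∀ t, dn t ≠ 0 := by
    intro t h
    have h1 := hid1 t
    have h2 := hid2 t
    nlinarith [sq_nonneg (cn t), sq_nonneg (sn t)]
  have hdnpos : ∀ t, 0 < dn t := by
    intro t
    by_contra h
    push_neg at h
    have hlt : dn t < 0 := lt_of_le_of_ne h (hdnne t)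
    have hc : ContinuousOn dn (Set.uIcc 0 t) :=
      (fun x _ => ((hdn x).differentiableAt.continuousAt.continuousWithinAt))
    have : (0:ℝ) ∈ Set.uIcc (dn 0) (dn t) := by
      rw [hdn0]; exact Set.mem_uIcc.2 (Or.inr ⟨hlt.le, zero_le_one⟩)
    obtain ⟨s, _, hs⟩ := intermediate_value_uIcc hc this
    exact hdnne s hs
  have hcnposK : ∀ t, 0 ≤ t → t < ellK k → 0 < cn t := by
    -- integrand continuity
    set f : ℝ → ℝ := fun θ => 1 / Real.sqrt (1 - k^2 * (Real.sin θ)^2) with hf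
    have hden : ∀ θ, 0 < 1 - k^2 * (Real.sin θ)^2 := by
      intro θ
      nlinarith [sin_sq_le_one θ, sq_nonneg (Real.sin θ), sq_nonneg k]
    have hfc : Continuous f := by
      apply Continuous.div continuous_const
      · exact (continuous_const.sub (continuous_const.mul ((continuous_sin.pow 2)))).sqrt
      · intro θ
        exact (Real.sqrt_pos.2 (hden θ)).ne'
    -- F primitive
    set F : ℝ → ℝ := fun y => ∫ θ in (0:ℝ)..y, f θ with hFdef
    have hF : ∀ y, HasDerivAt F (f y) y := by
      intro y
      exact intervalIntegral.integral_hasDerivAt_right (hfc.intervalIntegrable _ _)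
        (hfc.stronglyMeasurableAtFilter _ _) hfc.continuousAt
    have hFc : Continuous F := continuous_iff_continuousAt.2 fun y => (hF y).differentiableAt.continuousAt
    have hsnc : Continuous sn := continuous_iff_continuousAt.2 fun y => (hsn y).differentiableAt.continuousAt
    have hcnc : Continuous cn := continuous_iff_continuousAt.2 fun y => (hcn y).differentiableAt.continuousAt
    intro t ht0 htK
    by_contra h
    push_neg at h
    -- there is a zero of cn in [0, t]
    have hzero : ∃ s ∈ Set.Icc (0:ℝ) t, cn s = 0 := by
      have hc : ContinuousOn cn (Set.uIcc 0 t) := hcnc.continuousOn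
      have h0 : (0:ℝ) ∈ Set.uIcc (cn 0) (cn t) := by
        rw [hcn0]; exact Set.mem_uIcc.2 (Or.inr ⟨h, zero_le_one⟩)
      obtain ⟨s, hs, hs0⟩ := intermediate_value_uIcc hc h0
      rw [Set.uIcc_of_le ht0] at hs
      exact ⟨s, hs, hs0⟩
    set S : Set ℝ := {s | s ∈ Set.Icc (0:ℝ) t ∧ cn s = 0} with hS
    have hSne : S.Nonempty := by obtain ⟨s, h1, h2⟩ := hzero; exact ⟨s, h1, h2⟩
    have hScl : IsClosed S :=
      (isClosed_Icc.inter (isClosed_singleton.preimage hcnc) : IsClosed (Set.Icc 0 t ∩ cn ⁻¹' {0}))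
    have hSbd : BddBelow S := ⟨0, fun s hs => hs.1.1⟩
    set T := sInf S with hT
    have hTS : T ∈ S := hScl.csInf_mem hSne hSbd
    have hT0 : 0 ≤ T := hTS.1.1
    have hTt : T ≤ t := hTS.1.2
    have hcnT : cn T = 0 := hTS.2
    -- cn > 0 on [0, T)
    have hcnpos : ∀ s, 0 ≤ s → s < T → 0 < cn s := by
      intro s hs0 hsT
      rcases lt_trichotomy (cn s) 0 with hlt | heq | hgt
      · -- zero between 0 and s, below T, contradiction
        have hc : ContinuousOn cn (Set.uIcc 0 s) := hcnc.continuousOn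
        have h0 : (0:ℝ) ∈ Set.uIcc (cn 0) (cn s) := by
          rw [hcn0]; exact Set.mem_uIcc.2 (Or.inr ⟨hlt.le, zero_le_one⟩)
        obtain ⟨r, hr, hr0⟩ := intermediate_value_uIcc hc h0
        rw [Set.uIcc_of_le hs0] at hr
        have : T ≤ r := csInf_le hSbd ⟨⟨hr.1, le_trans hr.2 (le_trans hsT.le hTt)⟩, hr0⟩
        linarith [hr.2]
      · exact absurd (csInf_le hSbd ⟨⟨hs0, hsT.le.trans hTt⟩, heq⟩) (not_le.2 hsT)
      · exact hgt
    have hTpos : 0 < T := by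
      rcases lt_or_eq_of_le hT0 with h' | h'
      · exact h'
      · exfalso; rw [← h'] at hcnT; rw [hcn0] at hcnT; norm_num at hcnT
    -- sn bounds on [0,T)
    have hsnlt : ∀ s, 0 ≤ s → s < T → sn s ^ 2 < 1 := by
      intro s hs0 hsT
      have := hid1 s
      nlinarith [hcnpos s hs0 hsT]
    -- sn monotone on [0,T], sn T = 1
    have hsnmono : MonotoneOn sn (Set.Icc 0 T) := by
      apply monotoneOn_of_deriv_nonneg (convex_Icc _ _) hsnc.continuousOn
        (fun x _ => (hsn x).differentiableAt.differentiableWithinAt)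
      intro x hx
      rw [interior_Icc] at hx
      rw [(hsn x).deriv]
      exact mul_nonneg (hcnpos x hx.1.le hx.2).le (hdnpos x).le
    have hsnT : sn T = 1 := by
      have h1 : sn T ^ 2 = 1 := by have := hid1 T; rw [hcnT] at this; nlinarith
      have h2 : 0 ≤ sn T := by
        have := hsnmono ⟨le_refl 0, hT0⟩ ⟨hT0, le_refl T⟩ hT0
        rwa [hsn0] at this
      nlinarith
    -- key: G s = s on [0,T] where G s = F (arcsin (sn s))
    set G : ℝ → ℝ := fun s => F (Real.arcsin (sn s)) with hG
    have hGc : Continuous G := hFc.comp (Real.continuous_arcsin.comp hsnc)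
    have hGderiv : ∀ x ∈ Set.Ico (0:ℝ) T, HasDerivAt G 1 x := by
      intro x hx
      have hcnx := hcnpos x hx.1 hx.2
      have hdnx := hdnpos x
      have hsq := hsnlt x hx.1 hx.2
      have hne1 : sn x ≠ 1 := by intro h; rw [h] at hsq; norm_num at hsq
      have hne1' : sn x ≠ -1 := by intro h; rw [h] at hsq; norm_num at hsq
      have harc : HasDerivAt (fun s => Real.arcsin (sn s))
          (1 / Real.sqrt (1 - sn x ^ 2) * (cn x * dn x)) x :=
        (Real.hasDerivAt_arcsin hne1' hne1).comp x (hsn x)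
      have hcomp := (hF (Real.arcsin (sn x))).comp x harc
      have hsqrt1 : Real.sqrt (1 - sn x ^ 2) = cn x := by
        rw [show (1 : ℝ) - sn x ^ 2 = cn x ^ 2 by nlinarith [hid1 x]]
        exact Real.sqrt_sq hcnx.le
      have hsqrt2 : Real.sqrt (1 - k^2 * (Real.sin (Real.arcsin (sn x)))^2) = dn x := by
        rw [Real.sin_arcsin (by nlinarith) (by nlinarith)]
        rw [show (1 : ℝ) - k^2 * sn x ^ 2 = dn x ^ 2 by nlinarith [hid2 x]]
        exact Real.sqrt_sq hdnx.le
      refine hcomp.congr_deriv ?_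
      simp only [f]
      rw [hsqrt1, hsqrt2]
      field_simp
    have hGeq : ∀ y ∈ Set.Icc (0:ℝ) T, G y = y := by
      apply eq_of_has_deriv_right_eq (f' := fun _ => (1:ℝ))
        (fun x hx => (hGderiv x hx).hasDerivWithinAt)
        (fun x _ => (hasDerivAt_id x).hasDerivWithinAt.congr_deriv rfl)
        hGc.continuousOn continuous_id.continuousOn
      simp [G, hsn0, Real.arcsin_zero, F]
    have hGT := hGeq T ⟨hT0, le_refl T⟩
    have : G T = ellK k := by
      simp only [G, hsnT, Real.arcsin_one]
      rfl
    rw [this] at hGT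
    -- T = ellK k but T ≤ t < ellK k
    linarith
  have hcnpos : ∀ t, 0 ≤ t → t ≤ u → 0 < cn t := fun t h1 h2 => hcnposK t h1 (lt_of_le_of_lt h2 hu)
  have hsnc : Continuous sn := continuous_iff_continuousAt.2 fun y => (hsn y).differentiableAt.continuousAt
  have hcnc : Continuous cn := continuous_iff_continuousAt.2 fun y => (hcn y).differentiableAt.continuousAt
  have hdnc : Continuous dn := continuous_iff_continuousAt.2 fun y => (hdn y).differentiableAt.continuousAt
  -- basic bounds on [0,u]
  have hsnsq : ∀ t, 0 ≤ t → t ≤ u → sn t ^ 2 < 1 := by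
    intro t h1 h2; nlinarith [hcnpos t h1 h2, hid1 t]
  have hsnabs : ∀ t, 0 ≤ t → t ≤ u → -1 < sn t ∧ sn t < 1 := by
    intro t h1 h2
    have := hsnsq t h1 h2
    constructor <;> nlinarith
  have h1k : ∀ t, 0 ≤ t → t ≤ u → 0 < 1 + k * sn t := by
    intro t h1 h2
    have := (hsnabs t h1 h2).1
    nlinarith
  have h1s : ∀ t, 0 ≤ t → t ≤ u → 0 < 1 + sn t := by
    intro t h1 h2; linarith [(hsnabs t h1 h2).1]
  have hcd : ∀ t, cn t ≤ dn t := by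
    intro t
    have h1 := hid1 t
    have h2 := hid2 t
    have := hdnpos t
    rcases le_or_gt (cn t) 0 with h | h
    · linarith
    · have hsq : cn t ^ 2 ≤ dn t ^ 2 := by
        nlinarith [mul_nonneg (by nlinarith : (0:ℝ) ≤ 1 - k^2) (sq_nonneg (sn t))]
      have h2 := Real.sqrt_le_sqrt hsq
      rwa [Real.sqrt_sq h.le, Real.sqrt_sq (hdnpos t).le] at h2
  constructor
  · -- lower bound: ψ t = t - log(1 + k sn t) + log (dn t), ψ 0 = 0, ψ' ≥ 0
    set ψ : ℝ → ℝ := fun t => t - Real.log (1 + k * sn t) + Real.log (dn t) with hψ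
    have hψD : ∀ t, 0 ≤ t → t ≤ u → HasDerivAt ψ
        (1 - (k * (cn t * dn t)) / (1 + k * sn t) + (-(k^2 * sn t * cn t)) / dn t) t := by
      intro t h1 h2
      have hlog1 : HasDerivAt (fun s => Real.log (1 + k * sn s)) ((k * (cn t * dn t)) / (1 + k * sn t)) t := by
        have : HasDerivAt (fun s => 1 + k * sn s) (k * (cn t * dn t)) t :=
          ((hsn t).const_mul k).const_add 1
        exact this.log (h1k t h1 h2).ne'
      have hlog2 : HasDerivAt (fun s => Real.log (dn s)) ((-(k^2 * sn t * cn t)) / dn t) t :=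
        (hdn t).log (hdnpos t).ne'
      exact ((hasDerivAt_id t).sub hlog1).add hlog2
    have hmono : MonotoneOn ψ (Set.Icc 0 u) := by
      apply monotoneOn_of_deriv_nonneg (convex_Icc _ _)
      · apply ContinuousOn.add (ContinuousOn.sub continuousOn_id ?_) ?_
        · apply (Real.continuousOn_log.comp ((continuous_const.add (continuous_const.mul hsnc)).continuousOn))
          intro t ht; exact (h1k t ht.1 ht.2).ne'
        · apply (Real.continuousOn_log.comp hdnc.continuousOn)
          intro t _; exact (hdnpos t).ne'
      · intro t ht
        rw [interior_Icc] at ht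
        exact (hψD t ht.1.le ht.2.le).differentiableAt.differentiableWithinAt
      · intro t ht
        rw [interior_Icc] at ht
        rw [(hψD t ht.1.le ht.2.le).deriv]
        have hcnt := hcnpos t ht.1.le ht.2.le
        have hdnt := hdnpos t
        have h1kt := h1k t ht.1.le ht.2.le
        have hcdt := hcd t
        have key : 1 - (k * (cn t * dn t)) / (1 + k * sn t) + (-(k^2 * sn t * cn t)) / dn t
            = 1 - k * cn t / dn t := by
          have hd2 : dn t ^ 2 = (1 - k * sn t) * (1 + k * sn t) := by nlinarith [hid2 t]
          field_simp
          linear_combination (-(k * cn t)) * hd2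
        rw [key]
        have : k * cn t ≤ dn t := by nlinarith
        have := div_le_one_of_le₀ this (hdnpos t).le
        linarith [this]
    have := hmono ⟨le_refl 0, hu0⟩ ⟨hu0, le_refl u⟩ hu0
    simp only [ψ, hsn0, hdn0, mul_zero, add_zero, Real.log_one, sub_zero, zero_sub, zero_add] at this
    rw [Real.log_div (h1k u hu0 le_rfl).ne' (hdnpos u).ne']
    linarith
  · -- upper bound
    set φ : ℝ → ℝ := fun t => Real.log (1 + sn t) - Real.log (cn t) - t with hφ
    have hφD : ∀ t, 0 ≤ t → t ≤ u → HasDerivAt φ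
        ((cn t * dn t) / (1 + sn t) - (-(sn t * dn t)) / cn t - 1) t := by
      intro t h1 h2
      have hlog1 : HasDerivAt (fun s => Real.log (1 + sn s)) ((cn t * dn t) / (1 + sn t)) t :=
        ((hsn t).const_add 1).log (h1s t h1 h2).ne'
      have hlog2 : HasDerivAt (fun s => Real.log (cn s)) ((-(sn t * dn t)) / cn t) t :=
        (hcn t).log (hcnpos t h1 h2).ne'
      exact (hlog1.sub hlog2).sub (hasDerivAt_id t)
    have hmono : MonotoneOn φ (Set.Icc 0 u) := by
      apply monotoneOn_of_deriv_nonneg (convex_Icc _ _)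
      · apply ContinuousOn.sub (ContinuousOn.sub ?_ ?_) continuousOn_id
        · apply (Real.continuousOn_log.comp ((continuous_const.add hsnc).continuousOn))
          intro t ht; exact (h1s t ht.1 ht.2).ne'
        · apply (Real.continuousOn_log.comp hcnc.continuousOn)
          intro t ht; exact (hcnpos t ht.1 ht.2).ne'
      · intro t ht
        rw [interior_Icc] at ht
        exact (hφD t ht.1.le ht.2.le).differentiableAt.differentiableWithinAt
      · intro t ht
        rw [interior_Icc] at ht
        rw [(hφD t ht.1.le ht.2.le).deriv]
        have hcnt := hcnpos t ht.1.le ht.2.le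
        have hdnt := hdnpos t
        have h1st := h1s t ht.1.le ht.2.le
        have hcdt := hcd t
        have key : (cn t * dn t) / (1 + sn t) - (-(sn t * dn t)) / cn t - 1
            = dn t / cn t - 1 := by
          have hc2 : cn t ^ 2 = (1 - sn t) * (1 + sn t) := by nlinarith [hid1 t]
          field_simp
          linear_combination (dn t) * hc2
        rw [key]
        have := (one_le_div hcnt).2 hcdt
        linarith
    have := hmono ⟨le_refl 0, hu0⟩ ⟨hu0, le_refl u⟩ hu0
    simp only [φ, hsn0, hcn0, add_zero, Real.log_one, sub_zero, zero_sub, sub_self] at this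
    rw [Real.log_div (h1s u hu0 le_rfl).ne' (hcnpos u hu0 le_rfl).ne']
    linarith
end

section
/- For 0 < k < 1 and 0 ≤ u ≤ K(k), Jacobi's zeta function satisfies zn(u) ≤ (E − k'²·K)·(1 − u/K), where E = E(k) and K = K(k). -/
open Real intervalIntegral

set_option maxHeartbeats 1000000

lemma zn_ptwise (k a b e A c ww : ℝ) (hk0 : 0 < k) (hk1 : k < 1)
    (hA : A^2 ≤ 1) (hc : c^2 ≤ 1) (ha : a^2 ≤ 4) (hb : b^2 ≤ 4) (he : e^2 ≤ 4)
    (hw : 0 ≤ ww) :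
    2*ww*(a*b*e + (1-k^2)*a*c*e - (1+k^2)*A*b*e) ≤ 6*ww*(a^2+b^2+e^2) := by
  have h : 2*(a*b*e + (1-k^2)*a*c*e - (1+k^2)*A*b*e) ≤ 6*(a^2+b^2+e^2) := by
    have hk2 : 0 < 1 - k^2 := by nlinarith
    have h1 : 2*(a*b*e) ≤ 4*b^2 + e^2 := by nlinarith [sq_nonneg (a*b - e), mul_le_mul_of_nonneg_right ha (sq_nonneg b)]
    have h2 : 2*(a*c*e) ≤ a^2 + e^2 := by nlinarith [sq_nonneg (a - c*e), mul_le_mul_of_nonneg_right hc (sq_nonneg e)]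
    have h2' : 2*((1-k^2)*(a*c*e)) ≤ a^2 + e^2 := by nlinarith [sq_nonneg (a^2+e^2 - 2*(a*c*e))]
    have h3 : -(2*(A*b*e)) ≤ b^2 + e^2 := by nlinarith [sq_nonneg (A*b + e), mul_le_mul_of_nonneg_right hA (sq_nonneg b)]
    have h3' : -(2*((1+k^2)*(A*b*e))) ≤ 2*(b^2 + e^2) := by nlinarith [sq_nonneg (b^2+e^2 + 2*(A*b*e))]
    nlinarith
  nlinarith [mul_le_mul_of_nonneg_left h hw]

theorem zn_upper_bound (k : ℝ) (hk0 : 0 < k) (hk1 : k < 1)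
    (sn cn dn : ℝ → ℝ)
    (hsn0 : sn 0 = 0) (hcn0 : cn 0 = 1) (hdn0 : dn 0 = 1)
    (hsn : ∀ u : ℝ, HasDerivAt sn (cn u * dn u) u)
    (hcn : ∀ u : ℝ, HasDerivAt cn (-(sn u * dn u)) u)
    (hdn : ∀ u : ℝ, HasDerivAt dn (-(k^2 * sn u * cn u)) u)
    (u : ℝ) (hu0 : 0 ≤ u) (hu : u ≤ ellK k) :
    (∫ v in (0:ℝ)..u, (dn v)^2) - u * ellE k / ellK k ≤
      (ellE k - (1 - k^2) * ellK k) * (1 - u / ellK k) := by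
  have hk2 : (0:ℝ) < 1 - k^2 := by nlinarith
  set k' : ℝ := Real.sqrt (1 - k^2) with hk'def
  have hk'pos : 0 < k' := Real.sqrt_pos.mpr hk2
  have hk'sq : k'^2 = 1 - k^2 := Real.sq_sqrt hk2.le
  -- Pythagorean identities
  have key1 : ∀ x : ℝ, HasDerivAt (fun x => sn x ^2 + cn x ^2) 0 x := by
    intro y
    have h := ((hsn y).pow 2).add ((hcn y).pow 2)
    exact h.congr_deriv (by ring)
  have hsc : ∀ x : ℝ, sn x ^2 + cn x ^2 = 1 := by
    intro x
    have := is_const_of_deriv_eq_zero (fun y => (key1 y).differentiableAt)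
      (fun y => (key1 y).deriv) x 0
    simpa [hsn0, hcn0] using this
  have key2 : ∀ x : ℝ, HasDerivAt (fun x => dn x ^2 + k^2 * sn x ^2) 0 x := by
    intro y
    have h := ((hdn y).pow 2).add (((hsn y).pow 2).const_mul (k^2))
    exact h.congr_deriv (by ring)
  have hdsc : ∀ x : ℝ, dn x ^2 + k^2 * sn x ^2 = 1 := by
    intro x
    have := is_const_of_deriv_eq_zero (fun y => (key2 y).differentiableAt)
      (fun y => (key2 y).deriv) x 0
    simpa [hsn0, hdn0] using this
  have hsn1 : ∀ x, sn x ^2 ≤ 1 := fun x => by nlinarith [hsc x, sq_nonneg (cn x)]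
  have hcn1 : ∀ x, cn x ^2 ≤ 1 := fun x => by nlinarith [hsc x, sq_nonneg (sn x)]
  have hdn1 : ∀ x, dn x ^2 ≤ 1 := fun x => by nlinarith [hdsc x, sq_nonneg (sn x), sq_nonneg k]
  -- the functions d and w
  set d : ℝ → ℝ := fun θ => Real.sqrt (1 - k^2 * Real.sin θ^2) with hd_def
  set w : ℝ → ℝ := fun θ => 1 / Real.sqrt (1 - k^2 * Real.sin θ^2) with hw_def
  have hgpos : ∀ θ, 0 < 1 - k^2 * Real.sin θ^2 := by
    intro θ; nlinarith [Real.sin_sq_le_one θ, sq_nonneg (Real.sin θ), sq_nonneg k]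
  have hdpos : ∀ θ, 0 < d θ := fun θ => Real.sqrt_pos.mpr (hgpos θ)
  have hdsq : ∀ θ, d θ ^2 = 1 - k^2 * Real.sin θ^2 := fun θ => Real.sq_sqrt (hgpos θ).le
  have hd1 : ∀ θ, d θ ≤ 1 := by
    intro θ
    have h1 : (1 - k^2 * Real.sin θ^2) ≤ 1 := by nlinarith [sq_nonneg (Real.sin θ), sq_nonneg k]
    calc d θ = Real.sqrt (1 - k^2 * Real.sin θ^2) := rfl
      _ ≤ Real.sqrt 1 := Real.sqrt_le_sqrt h1
      _ = 1 := Real.sqrt_one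
  have hdk' : ∀ θ, k' ≤ d θ := by
    intro θ
    apply Real.sqrt_le_sqrt
    nlinarith [Real.sin_sq_le_one θ, sq_nonneg k]
  have hwd : ∀ θ, w θ = 1 / d θ := fun θ => rfl
  have hwpos : ∀ θ, 0 < w θ := fun θ => by rw [hwd]; exact one_div_pos.mpr (hdpos θ)
  have hdw1 : ∀ θ, d θ * w θ = 1 := fun θ => by
    rw [hwd]; field_simp [(hdpos θ).ne']
  have hwle : ∀ θ, w θ ≤ 1 / k' := by
    intro θ; rw [hwd]
    exact one_div_le_one_div_of_le hk'pos (hdk' θ)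
  have hd_cont : Continuous d := by
    apply Continuous.sqrt; continuity
  have hw_cont : Continuous w := by
    apply Continuous.div continuous_const hd_cont
    exact fun θ => (hdpos θ).ne'
  have hd_deriv : ∀ θ, HasDerivAt d (-(k^2 * Real.sin θ * Real.cos θ) * w θ) θ := by
    intro θ
    have hinner : HasDerivAt (fun θ => 1 - k^2 * Real.sin θ^2)
        (-(k^2 * (2 * Real.sin θ * Real.cos θ))) θ := by
      have h := ((Real.hasDerivAt_sin θ).pow 2).const_mul (k^2)
      have h2 := (hasDerivAt_const θ (1:ℝ)).sub h
      exact h2.congr_deriv (by ring)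
    have h := hinner.sqrt (hgpos θ).ne'
    refine h.congr_deriv ?_
    show _ / (2 * d θ) = _
    rw [hwd]
    field_simp [(hdpos θ).ne']
  -- v : inverse amplitude
  set v : ℝ → ℝ := fun θ => ∫ t in (0:ℝ)..θ, w t with hv_def
  have hw_int : ∀ a b : ℝ, IntervalIntegrable w MeasureTheory.volume a b :=
    fun a b => hw_cont.intervalIntegrable a b
  have hv_deriv : ∀ θ, HasDerivAt v (w θ) θ := by
    intro θ
    exact intervalIntegral.integral_hasDerivAt_right (hw_int 0 θ)
      (hw_cont.stronglyMeasurableAtFilter _ _) hw_cont.continuousAt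
  have hv0 : v 0 = 0 := intervalIntegral.integral_same
  have hvK : v (π/2) = ellK k := rfl
  -- the comparison function φ and its derivative
  set φ : ℝ → ℝ := fun θ =>
    (sn (v θ) - Real.sin θ)^2 + (cn (v θ) - Real.cos θ)^2 + (dn (v θ) - d θ)^2 with hφ_def
  set E' : ℝ → ℝ := fun θ =>
    2*(sn (v θ) - Real.sin θ)*(cn (v θ) * dn (v θ) * w θ - Real.cos θ)
    + 2*(cn (v θ) - Real.cos θ)*(-(sn (v θ) * dn (v θ)) * w θ + Real.sin θ)
    + 2*(dn (v θ) - d θ)*(-(k^2 * sn (v θ) * cn (v θ)) * w θ + k^2 * Real.sin θ * Real.cos θ * w θ)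
    with hE'_def
  have hφ_deriv : ∀ θ, HasDerivAt φ (E' θ) θ := by
    intro θ
    have hS : HasDerivAt (fun θ => sn (v θ)) (cn (v θ) * dn (v θ) * w θ) θ :=
      (hsn (v θ)).comp θ (hv_deriv θ)
    have hC : HasDerivAt (fun θ => cn (v θ)) (-(sn (v θ) * dn (v θ)) * w θ) θ :=
      (hcn (v θ)).comp θ (hv_deriv θ)
    have hD : HasDerivAt (fun θ => dn (v θ)) (-(k^2 * sn (v θ) * cn (v θ)) * w θ) θ :=
      (hdn (v θ)).comp θ (hv_deriv θ)
    have h1 := ((hS.sub (Real.hasDerivAt_sin θ)).pow 2)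
    have h2 := ((hC.sub (Real.hasDerivAt_cos θ)).pow 2)
    have h3 := ((hD.sub (hd_deriv θ)).pow 2)
    have h := (h1.add h2).add h3
    refine h.congr_deriv ?_
    simp only [hE'_def, Pi.sub_apply]
    ring
  have hφ0 : φ 0 = 0 := by
    simp [hφ_def, hv0, hsn0, hcn0, hdn0, hd_def]
  have hφnonneg : ∀ θ, 0 ≤ φ θ := by
    intro θ; simp only [hφ_def]; positivity
  -- the key differential inequality
  have hE'le : ∀ θ, E' θ ≤ (6/k') * φ θ := by
    intro θ
    set A := sn (v θ)
    set B := cn (v θ)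
    set D := dn (v θ)
    set s := Real.sin θ
    set c := Real.cos θ
    have hfact : E' θ = 2 * w θ * ((A-s)*(B-c)*(D-d θ) + (1-k^2)*(A-s)*c*(D-d θ)
        - (1+k^2)*A*(B-c)*(D-d θ)) := by
      simp only [hE'_def]
      linear_combination (2*(A-s)*c - 2*(B-c)*s) * (hdw1 θ)
    have hA2 : A^2 ≤ 1 := hsn1 _
    have hc2 : c^2 ≤ 1 := by nlinarith [Real.sin_sq_add_cos_sq θ, sq_nonneg (Real.sin θ)]
    have hs2 : s^2 ≤ 1 := by nlinarith [Real.sin_sq_add_cos_sq θ, sq_nonneg (Real.cos θ)]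
    have ha2 : (A-s)^2 ≤ 4 := by nlinarith [sq_nonneg (A+s)]
    have hb2 : (B-c)^2 ≤ 4 := by nlinarith [sq_nonneg (B+c), hcn1 (v θ)]
    have he2 : (D-d θ)^2 ≤ 4 := by
      nlinarith [sq_nonneg (D + d θ), hdn1 (v θ), hd1 θ, (hdpos θ).le]
    have := zn_ptwise k (A-s) (B-c) (D-d θ) A c (w θ) hk0 hk1 hA2 hc2 ha2 hb2 he2 (hwpos θ).le
    rw [hfact]
    calc 2 * w θ * ((A-s)*(B-c)*(D-d θ) + (1-k^2)*(A-s)*c*(D-d θ)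
          - (1+k^2)*A*(B-c)*(D-d θ))
        ≤ 6 * w θ * ((A-s)^2 + (B-c)^2 + (D-d θ)^2) := by linarith [this]
      _ ≤ (6/k') * φ θ := by
          have hφθ : φ θ = (A-s)^2 + (B-c)^2 + (D-d θ)^2 := rfl
          rw [hφθ]
          have h6 : 6 * w θ ≤ 6 / k' := by
            have h := hwle θ
            have : (6:ℝ) / k' = 6 * (1/k') := by ring
            rw [this]
            linarith
          have hnn : (0:ℝ) ≤ (A-s)^2 + (B-c)^2 + (D-d θ)^2 := by positivity
          exact mul_le_mul_of_nonneg_right h6 hnn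
  -- Gronwall: ψ = φ·exp(-Lθ) is antitone, hence φ = 0 for θ ≥ 0
  set L : ℝ := 6 / k' with hL_def
  set ψ : ℝ → ℝ := fun θ => φ θ * Real.exp (-L * θ) with hψ_def
  have hψ_deriv : ∀ θ, HasDerivAt ψ ((E' θ - L * φ θ) * Real.exp (-L * θ)) θ := by
    intro θ
    have hexp : HasDerivAt (fun θ : ℝ => Real.exp (-L * θ)) (Real.exp (-L*θ) * (-L*1)) θ :=
      ((hasDerivAt_id θ).const_mul (-L)).exp
    have h := (hφ_deriv θ).mul hexp
    refine h.congr_deriv ?_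
    ring
  have hψ_anti : Antitone ψ := by
    apply antitone_of_deriv_nonpos (fun θ => (hψ_deriv θ).differentiableAt)
    intro θ
    rw [(hψ_deriv θ).deriv]
    apply mul_nonpos_of_nonpos_of_nonneg
    · have h := hE'le θ
      have hLφ : L * φ θ = 6/k' * φ θ := by rw [hL_def]
      linarith
    · exact (Real.exp_pos _).le
  have hφzero : ∀ θ, 0 ≤ θ → φ θ = 0 := by
    intro θ hθ
    have h1 : ψ θ ≤ ψ 0 := hψ_anti hθ
    have h2 : ψ 0 = 0 := by simp [hψ_def, hφ0]
    have h3 : 0 ≤ ψ θ := mul_nonneg (hφnonneg θ) (Real.exp_pos _).le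
    have h4 : φ θ * Real.exp (-L*θ) = 0 := le_antisymm (h2 ▸ h1) h3
    rcases mul_eq_zero.mp h4 with h | h
    · exact h
    · exact absurd h (Real.exp_pos _).ne'
  have hCeq : ∀ θ, 0 ≤ θ → cn (v θ) = Real.cos θ := by
    intro θ hθ
    have h := hφzero θ hθ
    have h1 : (cn (v θ) - Real.cos θ)^2 = 0 := by
      have h2 : (sn (v θ) - Real.sin θ)^2 + (cn (v θ) - Real.cos θ)^2 + (dn (v θ) - d θ)^2 = 0 := h
      nlinarith [sq_nonneg (sn (v θ) - Real.sin θ), sq_nonneg (dn (v θ) - d θ),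
        sq_nonneg (cn (v θ) - Real.cos θ)]
    have h3 : cn (v θ) - Real.cos θ = 0 := by
      exact pow_eq_zero_iff (two_ne_zero) |>.mp h1
    linarith
  -- positivity of K
  have hK0 : 0 < ellK k := by
    rw [← hvK]
    exact intervalIntegral.intervalIntegral_pos_of_pos (hw_int 0 (π/2)) hwpos
      (by have := Real.pi_pos; linarith)
  -- find θ₀ with v θ₀ = u
  obtain ⟨θ₀, hθ₀mem, hθ₀u⟩ : ∃ θ₀ ∈ Set.Icc (0:ℝ) (π/2), v θ₀ = u := by
    have hvc : ContinuousOn v (Set.Icc 0 (π/2)) :=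
      fun θ _ => ((hv_deriv θ).continuousAt).continuousWithinAt
    have hmem : u ∈ Set.Icc (v 0) (v (π/2)) := by
      rw [hv0, hvK]; exact ⟨hu0, hu⟩
    have himg := intermediate_value_Icc (by have := Real.pi_pos; linarith) hvc hmem
    obtain ⟨θ₀, h1, h2⟩ := himg
    exact ⟨θ₀, h1, h2⟩
  have hθ₀0 : 0 ≤ θ₀ := hθ₀mem.1
  have hθ₀π : θ₀ ≤ π/2 := hθ₀mem.2
  have hcn_cont : Continuous cn := by
    rw [continuous_iff_continuousAt]
    exact fun x => (hcn x).differentiableAt.continuousAt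
  have hcn2_cont : Continuous (fun x => cn x ^2) := hcn_cont.pow 2
  -- substitution in the integral
  have hsub : ∫ x in (0:ℝ)..u, cn x ^2 = ∫ θ in (0:ℝ)..θ₀, Real.cos θ^2 * w θ := by
    have h1 : ∫ θ in (0:ℝ)..θ₀, w θ • ((fun x => cn x ^2) ∘ v) θ
        = ∫ x in (v 0)..(v θ₀), cn x ^2 :=
      intervalIntegral.integral_comp_smul_deriv (fun θ _ => hv_deriv θ)
        hw_cont.continuousOn hcn2_cont
    rw [hv0, hθ₀u] at h1
    rw [← h1]
    apply intervalIntegral.integral_congr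
    intro θ hθ
    have hθIcc : θ ∈ Set.Icc 0 θ₀ := by rwa [Set.uIcc_of_le hθ₀0] at hθ
    simp only [Function.comp, smul_eq_mul]
    rw [hCeq θ hθIcc.1]
    ring
  have hnn : ∀ θ, 0 ≤ Real.cos θ^2 * w θ := fun θ => mul_nonneg (sq_nonneg _) (hwpos θ).le
  have hcw_cont : Continuous (fun θ => Real.cos θ^2 * w θ) :=
    (Real.continuous_cos.pow 2).mul hw_cont
  have hmono : ∫ θ in (0:ℝ)..θ₀, Real.cos θ^2 * w θ
      ≤ ∫ θ in (0:ℝ)..(π/2), Real.cos θ^2 * w θ := by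
    apply intervalIntegral.integral_mono_interval le_rfl hθ₀0 hθ₀π
    · exact MeasureTheory.ae_of_all _ hnn
    · exact hcw_cont.intervalIntegrable _ _
  -- the elliptic integral identity
  have hd_int : ∀ a b : ℝ, IntervalIntegrable d MeasureTheory.volume a b :=
    fun a b => hd_cont.intervalIntegrable a b
  have hident : ellE k - (1-k^2) * ellK k = k^2 * ∫ θ in (0:ℝ)..(π/2), Real.cos θ^2 * w θ := by
    have h1 : ∫ θ in (0:ℝ)..(π/2), (d θ - (1-k^2) * w θ) = ellE k - (1-k^2) * ellK k := by
      rw [intervalIntegral.integral_sub (hd_int 0 _) ((hw_int 0 _).const_mul _),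
        intervalIntegral.integral_const_mul]
      rfl
    rw [← h1, ← intervalIntegral.integral_const_mul]
    apply intervalIntegral.integral_congr
    intro θ _
    have h2 := hdsq θ
    have h3 := Real.sin_sq_add_cos_sq θ
    have h4 := hdw1 θ
    linear_combination (w θ) * h2 - (k^2 * w θ) * h3 - (d θ) * h4
  -- decompose dn²
  have hdn2 : ∀ x, dn x^2 = (1-k^2) + k^2 * cn x^2 := by
    intro x
    linear_combination hdsc x - k^2 * hsc x
  have hintdn : ∫ x in (0:ℝ)..u, dn x^2 = (1-k^2)*u + k^2 * ∫ x in (0:ℝ)..u, cn x^2 := by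
    rw [intervalIntegral.integral_congr (g := fun x => (1-k^2) + k^2 * cn x^2)
      (fun x _ => hdn2 x)]
    rw [intervalIntegral.integral_add intervalIntegrable_const
      ((hcn2_cont.intervalIntegrable _ _).const_mul _),
      intervalIntegral.integral_const_mul, intervalIntegral.integral_const]
    simp [smul_eq_mul]
    ring
  have hchain : k^2 * ∫ x in (0:ℝ)..u, cn x^2 ≤ ellE k - (1-k^2) * ellK k := by
    rw [hsub, hident]
    exact mul_le_mul_of_nonneg_left hmono (sq_nonneg k)
  have hfin : ∫ x in (0:ℝ)..u, dn x^2 ≤ (1-k^2)*u + (ellE k - (1-k^2)*ellK k) := by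
    rw [hintdn]; linarith
  have halg : (ellE k - (1-k^2)*ellK k) * (1 - u/ellK k)
      = (1-k^2)*u + (ellE k - (1-k^2)*ellK k) - u * ellE k / ellK k := by
    field_simp
    ring
  rw [halg]
  linarith
end

section
/- For 0 < k < 1, the function u ↦ dn²(u,k)·Θ⁴(u,k) is strictly monotone increasing on [0, K/2], where K = K(k) and Θ is Jacobi's theta function. Equivalently, the function g(u) = 2·zn(u) − k²·sn(u)·cn(u)/dn(u) is positive on (0, K/2), where zn = Θ'/Θ is Jacobi's zeta function. -/
open Real intervalIntegral

private lemma gron_bound (c M a1 a2 a3 b1 b2 b3 : ℝ) (hc0 : 0 ≤ c) (hc1 : c ≤ 1)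
    (hM : 1 ≤ M)
    (h1 : |a1| ≤ M) (h2 : |a2| ≤ M) (h5 : |b2| ≤ M) :
    2*(a1 - b1)*(a2 * a3 - b2 * b3)
        + 2*(a2 - b2)*(-(a1 * a3) - -(b1 * b3))
        + 2*(a3 - b3)*(-(c * a1 * a2) - -(c * b1 * b2))
      ≤ 4 * M * ((a1 - b1)^2 + (a2 - b2)^2 + (a3 - b3)^2) := by
  rw [abs_le] at h1 h2 h5
  have hr : 2*(a1 - b1)*(a2 * a3 - b2 * b3)
        + 2*(a2 - b2)*(-(a1 * a3) - -(b1 * b3))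
        + 2*(a3 - b3)*(-(c * a1 * a2) - -(c * b1 * b2))
      = 2*(a2 - c * b2)*((a1-b1)*(a3-b3)) - 2*((1+c)*a1)*((a2-b2)*(a3-b3)) := by ring
  rw [hr]
  have hq1 : 0 ≤ 2*M - (a2 - c * b2) := by nlinarith
  have hq2 : 0 ≤ 2*M + (a2 - c * b2) := by nlinarith
  have hq3 : 0 ≤ 2*M - (1+c)*a1 := by nlinarith
  have hq4 : 0 ≤ 2*M + (1+c)*a1 := by nlinarith
  have hA : 2*(a2 - c * b2)*((a1-b1)*(a3-b3)) ≤ 2*M*((a1-b1)^2+(a3-b3)^2) := by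
    nlinarith [mul_nonneg hq1 (sq_nonneg ((a1-b1)+(a3-b3))),
      mul_nonneg hq2 (sq_nonneg ((a1-b1)-(a3-b3)))]
  have hB : -(2*((1+c)*a1)*((a2-b2)*(a3-b3))) ≤ 2*M*((a2-b2)^2+(a3-b3)^2) := by
    nlinarith [mul_nonneg hq3 (sq_nonneg ((a2-b2)-(a3-b3))),
      mul_nonneg hq4 (sq_nonneg ((a2-b2)+(a3-b3)))]
  nlinarith [mul_nonneg (by linarith : (0:ℝ) ≤ M) (sq_nonneg (a1-b1)),
    mul_nonneg (by linarith : (0:ℝ) ≤ M) (sq_nonneg (a2-b2))]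

/-- Uniqueness for the Jacobi elliptic ODE system, via a hand-rolled Gronwall argument. -/
lemma ode_triple_unique (c M : ℝ) (hc0 : 0 ≤ c) (hc1 : c ≤ 1) (hM : 1 ≤ M)
    (f1 f2 f3 g1 g2 g3 : ℝ → ℝ)
    (hf1 : ∀ u, HasDerivAt f1 (f2 u * f3 u) u)
    (hf2 : ∀ u, HasDerivAt f2 (-(f1 u * f3 u)) u)
    (hf3 : ∀ u, HasDerivAt f3 (-(c * f1 u * f2 u)) u)
    (hg1 : ∀ u, HasDerivAt g1 (g2 u * g3 u) u)
    (hg2 : ∀ u, HasDerivAt g2 (-(g1 u * g3 u)) u)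
    (hg3 : ∀ u, HasDerivAt g3 (-(c * g1 u * g2 u)) u)
    (hb : ∀ u, |f1 u| ≤ M ∧ |f2 u| ≤ M ∧ |f3 u| ≤ M ∧ |g1 u| ≤ M ∧ |g2 u| ≤ M ∧ |g3 u| ≤ M)
    (h01 : f1 0 = g1 0) (h02 : f2 0 = g2 0) (h03 : f3 0 = g3 0) :
    ∀ u, 0 ≤ u → f1 u = g1 u ∧ f2 u = g2 u ∧ f3 u = g3 u := by
  have hW : ∀ u, HasDerivAt
      (fun u => (f1 u - g1 u)^2 + (f2 u - g2 u)^2 + (f3 u - g3 u)^2)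
      (2*(f1 u - g1 u)*(f2 u * f3 u - g2 u * g3 u)
        + 2*(f2 u - g2 u)*(-(f1 u * f3 u) - -(g1 u * g3 u))
        + 2*(f3 u - g3 u)*(-(c * f1 u * f2 u) - -(c * g1 u * g2 u))) u := by
    intro u
    have h1 := ((((hf1 u).sub (hg1 u)).pow 2).add (((hf2 u).sub (hg2 u)).pow 2)).add
      (((hf3 u).sub (hg3 u)).pow 2)
    refine HasDerivAt.congr_deriv h1 ?_
    push_cast; simp only [Pi.sub_apply, Pi.pow_apply, Pi.mul_apply, Pi.add_apply]; ring
  have hV : ∀ u, HasDerivAt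
      (fun u => ((f1 u - g1 u)^2 + (f2 u - g2 u)^2 + (f3 u - g3 u)^2) * Real.exp (-(4*M)*u))
      ((2*(f1 u - g1 u)*(f2 u * f3 u - g2 u * g3 u)
        + 2*(f2 u - g2 u)*(-(f1 u * f3 u) - -(g1 u * g3 u))
        + 2*(f3 u - g3 u)*(-(c * f1 u * f2 u) - -(c * g1 u * g2 u))) * Real.exp (-(4*M)*u)
      + ((f1 u - g1 u)^2 + (f2 u - g2 u)^2 + (f3 u - g3 u)^2)
          * (Real.exp (-(4*M)*u) * -(4*M))) u := by
    intro u
    have hlin : HasDerivAt (fun u : ℝ => -(4*M)*u) (-(4*M)) u := by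
      simpa using (hasDerivAt_id u).const_mul (-(4*M))
    exact (hW u).mul hlin.exp
  have hVderiv : ∀ x, deriv
      (fun u => ((f1 u - g1 u)^2 + (f2 u - g2 u)^2 + (f3 u - g3 u)^2) * Real.exp (-(4*M)*u))
      x ≤ 0 := by
    intro x
    rw [(hV x).deriv]
    obtain ⟨b1, b2, b3, b4, b5, b6⟩ := hb x
    have hkey := gron_bound c M (f1 x) (f2 x) (f3 x) (g1 x) (g2 x) (g3 x) hc0 hc1 hM b1 b2 b5
    have h1 : (2*(f1 x - g1 x)*(f2 x * f3 x - g2 x * g3 x)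
        + 2*(f2 x - g2 x)*(-(f1 x * f3 x) - -(g1 x * g3 x))
        + 2*(f3 x - g3 x)*(-(c * f1 x * f2 x) - -(c * g1 x * g2 x))) * Real.exp (-(4*M)*x)
      + ((f1 x - g1 x)^2 + (f2 x - g2 x)^2 + (f3 x - g3 x)^2) * (Real.exp (-(4*M)*x) * -(4*M))
        = ((2*(f1 x - g1 x)*(f2 x * f3 x - g2 x * g3 x)
        + 2*(f2 x - g2 x)*(-(f1 x * f3 x) - -(g1 x * g3 x))
        + 2*(f3 x - g3 x)*(-(c * f1 x * f2 x) - -(c * g1 x * g2 x)))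
          - 4*M*((f1 x - g1 x)^2 + (f2 x - g2 x)^2 + (f3 x - g3 x)^2))
          * Real.exp (-(4*M)*x) := by ring
    rw [h1]
    exact mul_nonpos_of_nonpos_of_nonneg (by linarith) (Real.exp_nonneg _)
  have hVanti : AntitoneOn
      (fun u => ((f1 u - g1 u)^2 + (f2 u - g2 u)^2 + (f3 u - g3 u)^2) * Real.exp (-(4*M)*u))
      (Set.Ici 0) := by
    apply antitoneOn_of_deriv_nonpos (convex_Ici 0)
    · exact Continuous.continuousOn (by
        exact Differentiable.continuous (fun u : ℝ => (hV u).differentiableAt))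
    · exact fun x _ => ((hV x).differentiableAt).differentiableWithinAt
    · intro x _; exact hVderiv x
  intro u hu
  have hVle := hVanti (Set.self_mem_Ici) (Set.mem_Ici.2 hu) hu
  simp only [h01, h02, h03, sub_self, ne_eq, OfNat.ofNat_ne_zero, not_false_eq_true, zero_pow,
    add_zero, zero_mul, zero_add, mul_zero] at hVle
  have hexp : 0 < Real.exp (-(4*M)*u) := Real.exp_pos _
  have hWz : (f1 u - g1 u)^2 + (f2 u - g2 u)^2 + (f3 u - g3 u)^2 ≤ 0 := by
    nlinarith [hVle, sq_nonneg (f1 u - g1 u), sq_nonneg (f2 u - g2 u), sq_nonneg (f3 u - g3 u)]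
  refine ⟨?_, ?_, ?_⟩ <;>
    nlinarith [hWz, sq_nonneg (f1 u - g1 u), sq_nonneg (f2 u - g2 u), sq_nonneg (f3 u - g3 u)]


lemma am_exists (k : ℝ) (hk0 : 0 < k) (hk1 : k < 1) :
    ∃ G : ℝ → ℝ, StrictMono G ∧ G 0 = 0 ∧
      (∀ u, HasDerivAt G (Real.sqrt (1 - k^2 * Real.sin (G u)^2)) u) ∧
      (∀ θ, G (∫ t in (0:ℝ)..θ, 1 / Real.sqrt (1 - k^2 * Real.sin t^2)) = θ) ∧
      (∀ u, (∫ t in (0:ℝ)..(G u), 1 / Real.sqrt (1 - k^2 * Real.sin t^2)) = u) := by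
  have hpos : ∀ θ : ℝ, 0 < 1 - k^2 * Real.sin θ^2 := by
    intro θ
    nlinarith [Real.sin_sq_le_one θ, sq_nonneg (Real.sin θ), sq_nonneg k]
  have hΔpos : ∀ θ : ℝ, 0 < Real.sqrt (1 - k^2 * Real.sin θ^2) :=
    fun θ => Real.sqrt_pos.2 (hpos θ)
  have hΔle : ∀ θ : ℝ, Real.sqrt (1 - k^2 * Real.sin θ^2) ≤ 1 := by
    intro θ
    have h1 : (1:ℝ) = Real.sqrt 1 := Real.sqrt_one.symm
    nth_rewrite 2 [h1]
    apply Real.sqrt_le_sqrt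
    nlinarith [sq_nonneg (k * Real.sin θ)]
  have hΔcont : Continuous (fun θ : ℝ => Real.sqrt (1 - k^2 * Real.sin θ^2)) := by
    apply Real.continuous_sqrt.comp
    continuity
  have hρcont : Continuous (fun θ : ℝ => 1 / Real.sqrt (1 - k^2 * Real.sin θ^2)) :=
    continuous_const.div hΔcont (fun θ => (hΔpos θ).ne')
  set F : ℝ → ℝ := fun x => ∫ t in (0:ℝ)..x, 1 / Real.sqrt (1 - k^2 * Real.sin t^2) with hFdef
  have hF : ∀ x, HasDerivAt F (1 / Real.sqrt (1 - k^2 * Real.sin x^2)) x := by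
    intro x
    exact intervalIntegral.integral_hasDerivAt_right (hρcont.intervalIntegrable _ _)
      (hρcont.stronglyMeasurableAtFilter _ _) hρcont.continuousAt
  have hρge : ∀ θ : ℝ, 1 ≤ 1 / Real.sqrt (1 - k^2 * Real.sin θ^2) := by
    intro θ
    rw [le_div_iff₀ (hΔpos θ), one_mul]
    exact hΔle θ
  have hFmono : StrictMono F := by
    apply strictMono_of_deriv_pos
    intro x
    rw [(hF x).deriv]
    exact lt_of_lt_of_le one_pos (hρge x)
  have hF0 : F 0 = 0 := intervalIntegral.integral_same
  have hFcont : Continuous F :=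
    Differentiable.continuous (fun x => (hF x).differentiableAt)
  -- F x - x is monotone
  have hφmono : Monotone (fun x => F x - x) := by
    apply monotone_of_deriv_nonneg
    · exact fun x => ((hF x).sub ((hasDerivAt_id' (x := x)))).differentiableAt
    · intro x
      rw [show deriv (fun x => F x - x) x = _ from (((hF x).sub ((hasDerivAt_id' (x := x))))).deriv]
      have := hρge x
      linarith
  have hFgex : ∀ x : ℝ, 0 ≤ x → x ≤ F x := by
    intro x hx
    have := hφmono hx
    simp only [hF0] at this
    linarith
  have hFlex : ∀ x : ℝ, x ≤ 0 → F x ≤ x := by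
    intro x hx
    have := hφmono hx
    simp only [hF0] at this
    linarith
  have hFsurj : Function.Surjective F := by
    apply Continuous.surjective hFcont
    · apply Filter.tendsto_atTop_mono' _ _ Filter.tendsto_id
      filter_upwards [Filter.eventually_ge_atTop (0:ℝ)] with x hx
      exact hFgex x hx
    · apply Filter.tendsto_atBot_mono' _ _ Filter.tendsto_id
      filter_upwards [Filter.eventually_le_atBot (0:ℝ)] with x hx
      exact hFlex x hx
  set e := StrictMono.orderIsoOfSurjective F hFmono hFsurj with hedef
  refine ⟨fun u => e.symm u, (e.symm : ℝ ≃o ℝ).strictMono, ?_, ?_, ?_, ?_⟩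
  · have h := StrictMono.orderIsoOfSurjective_symm_apply_self F hFmono hFsurj 0
    rw [show F 0 = 0 from hF0] at h
    exact h
  · intro u
    have hGF : ∀ θ, e.symm (F θ) = θ :=
      fun θ => StrictMono.orderIsoOfSurjective_symm_apply_self F hFmono hFsurj θ
    have hFG : F (e.symm u) = u := by
      conv_rhs => rw [← e.apply_symm_apply u]
      rw [hedef]
      rw [StrictMono.coe_orderIsoOfSurjective F hFmono hFsurj]
    have hder := HasDerivAt.of_local_left_inverse
      ((e.symm : ℝ ≃o ℝ).continuous.continuousAt)
      (hF (e.symm u)) (ne_of_gt (lt_of_lt_of_le one_pos (hρge _)))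
      (Filter.Eventually.of_forall (fun y => by
        conv_rhs => rw [← e.apply_symm_apply y]
        rw [hedef, StrictMono.coe_orderIsoOfSurjective F hFmono hFsurj]))
    have : (1 / Real.sqrt (1 - k^2 * Real.sin (e.symm u)^2))⁻¹
        = Real.sqrt (1 - k^2 * Real.sin (e.symm u)^2) := by
      rw [one_div, inv_inv]
    rwa [this] at hder
  · intro θ
    exact StrictMono.orderIsoOfSurjective_symm_apply_self F hFmono hFsurj θ
  · intro u
    show F (e.symm u) = u
    conv_rhs => rw [← e.apply_symm_apply u]
    rw [hedef, StrictMono.coe_orderIsoOfSurjective F hFmono hFsurj]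

set_option maxHeartbeats 1000000 in
theorem dn_sq_theta_four_strictMono (k : ℝ) (hk0 : 0 < k) (hk1 : k < 1)
    (sn cn dn : ℝ → ℝ)
    (hsn0 : sn 0 = 0) (hcn0 : cn 0 = 1) (hdn0 : dn 0 = 1)
    (hsn : ∀ u : ℝ, HasDerivAt sn (cn u * dn u) u)
    (hcn : ∀ u : ℝ, HasDerivAt cn (-(sn u * dn u)) u)
    (hdn : ∀ u : ℝ, HasDerivAt dn (-(k^2 * sn u * cn u)) u)
    (Θ : ℝ → ℝ) (hΘpos : ∀ u : ℝ, 0 < Θ u)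
    (hΘ : ∀ u : ℝ, HasDerivAt Θ
      (((∫ v in (0:ℝ)..u, (dn v)^2) - u * ellE k / ellK k) * Θ u) u) :
    StrictMonoOn (fun u => (dn u)^2 * (Θ u)^4) (Set.Icc 0 (ellK k / 2)) ∧
    ∀ u ∈ Set.Ioo 0 (ellK k / 2),
      0 < 2 * ((∫ v in (0:ℝ)..u, (dn v)^2) - u * ellE k / ellK k)
        - k^2 * sn u * cn u / dn u := by
  have hkk2 : (0:ℝ) < 1 - k^2 := by nlinarith
  set q : ℝ := Real.sqrt (1 - k^2) with hqdef
  have hq0 : 0 < q := Real.sqrt_pos.2 hkk2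
  have hqsq : q^2 = 1 - k^2 := Real.sq_sqrt hkk2.le
  have hq1 : q < 1 := by nlinarith
  -- Pythagorean identities
  have hI1 : ∀ u, sn u^2 + cn u^2 = 1 := by
    have hder : ∀ u : ℝ, HasDerivAt (fun u => sn u^2 + cn u^2) 0 u := by
      intro u
      have h := ((hsn u).pow 2).add ((hcn u).pow 2)
      refine HasDerivAt.congr_deriv h ?_
      push_cast; ring
    have hconst := is_const_of_deriv_eq_zero
      (fun u => (hder u).differentiableAt) (fun u => (hder u).deriv)
    intro u
    have := hconst u 0
    simp only [hsn0, hcn0] at this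
    rw [this]; norm_num
  have hI2 : ∀ u, k^2 * sn u^2 + dn u^2 = 1 := by
    have hder : ∀ u : ℝ, HasDerivAt (fun u => k^2 * sn u^2 + dn u^2) 0 u := by
      intro u
      have h := (((hsn u).pow 2).const_mul (k^2)).add ((hdn u).pow 2)
      refine HasDerivAt.congr_deriv h ?_
      push_cast; ring
    have hconst := is_const_of_deriv_eq_zero
      (fun u => (hder u).differentiableAt) (fun u => (hder u).deriv)
    intro u
    have := hconst u 0
    simp only [hsn0, hdn0] at this
    rw [this]; norm_num
  have hsn1 : ∀ u, |sn u| ≤ 1 := by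
    intro u; rw [abs_le]; constructor <;> nlinarith [hI1 u, sq_nonneg (cn u)]
  have hcn1 : ∀ u, |cn u| ≤ 1 := by
    intro u; rw [abs_le]; constructor <;> nlinarith [hI1 u, sq_nonneg (sn u)]
  have hdnne : ∀ u, dn u ≠ 0 := by
    intro u h
    have h1 := hI2 u
    rw [h] at h1
    have h2 : sn u^2 ≤ 1 := by nlinarith [hI1 u, sq_nonneg (cn u)]
    nlinarith
  have hdnpos : ∀ u, 0 < dn u := by
    intro u
    by_contra h
    push_neg at h
    have hlt : dn u < 0 := lt_of_le_of_ne h (hdnne u)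
    have hcont : ContinuousOn dn (Set.uIcc u 0) :=
      (Differentiable.continuous (fun x => (hdn x).differentiableAt)).continuousOn
    have hsub := intermediate_value_uIcc hcont
    have h0mem : (0:ℝ) ∈ Set.uIcc (dn u) (dn 0) := by
      rw [hdn0, Set.mem_uIcc]
      left; exact ⟨hlt.le, zero_le_one⟩
    obtain ⟨x, -, hx⟩ := hsub h0mem
    exact hdnne x hx
  have hdnge : ∀ u, q ≤ dn u := by
    intro u
    nlinarith [hI2 u, hdnpos u, hqsq, hq0, hI1 u, sq_nonneg (cn u), sq_nonneg (k * cn u)]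
  have hdnle : ∀ u, dn u ≤ 1 := by
    intro u
    nlinarith [hI2 u, hdnpos u, sq_nonneg (k * sn u)]
  -- amplitude function
  obtain ⟨G, hGmono, hG0, hGderiv, hGF, hFG⟩ := am_exists k hk0 hk1
  have hKF : ellK k = ∫ t in (0:ℝ)..(π/2), 1 / Real.sqrt (1 - k^2 * Real.sin t^2) := rfl
  have hGK : G (ellK k) = π/2 := by rw [hKF]; exact hGF (π/2)
  have hKpos : 0 < ellK k := by
    by_contra h
    push_neg at h
    have h2 := hGmono.monotone h
    rw [hGK, hG0] at h2
    linarith [pi_pos]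
  have hpos' : ∀ θ : ℝ, 0 < 1 - k^2 * Real.sin θ^2 := by
    intro θ
    nlinarith [Real.sin_sq_le_one θ, sq_nonneg (Real.sin θ), sq_nonneg k]
  have hΔle : ∀ θ : ℝ, Real.sqrt (1 - k^2 * Real.sin θ^2) ≤ 1 := by
    intro θ
    have h1 : (1:ℝ) = Real.sqrt 1 := Real.sqrt_one.symm
    nth_rewrite 2 [h1]
    apply Real.sqrt_le_sqrt
    nlinarith [sq_nonneg (k * Real.sin θ)]
  have hsder : ∀ u, HasDerivAt (fun u => Real.sin (G u))
      (Real.cos (G u) * Real.sqrt (1 - k^2 * Real.sin (G u)^2)) u :=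
    fun u => (Real.hasDerivAt_sin (G u)).comp u (hGderiv u)
  have hcder : ∀ u, HasDerivAt (fun u => Real.cos (G u))
      (-(Real.sin (G u) * Real.sqrt (1 - k^2 * Real.sin (G u)^2))) u := by
    intro u
    have h := (Real.hasDerivAt_cos (G u)).comp u (hGderiv u)
    refine HasDerivAt.congr_deriv h ?_
    ring
  have hdder : ∀ u, HasDerivAt (fun u => Real.sqrt (1 - k^2 * Real.sin (G u)^2))
      (-(k^2 * Real.sin (G u) * Real.cos (G u))) u := by
    intro u
    have hin : HasDerivAt (fun u => 1 - k^2 * Real.sin (G u)^2)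
        (-(k^2 * (2 * Real.sin (G u) * (Real.cos (G u)
          * Real.sqrt (1 - k^2 * Real.sin (G u)^2))))) u := by
      have h1 := ((hsder u).pow 2).const_mul (k^2)
      have h2 := (hasDerivAt_const u (1:ℝ)).sub h1
      refine HasDerivAt.congr_deriv h2 ?_
      push_cast; ring
    have h3 := hin.sqrt (ne_of_gt (hpos' (G u)))
    convert h3 using 1
    have hΔne : Real.sqrt (1 - k^2 * Real.sin (G u)^2) ≠ 0 :=
      ne_of_gt (Real.sqrt_pos.2 (hpos' (G u)))
    field_simp
  -- uniqueness: sn = sin ∘ G etc. on [0, ∞)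
  have heq : ∀ u, 0 ≤ u → sn u = Real.sin (G u) ∧ cn u = Real.cos (G u) ∧
      dn u = Real.sqrt (1 - k^2 * Real.sin (G u)^2) := by
    apply ode_triple_unique (k^2) 1 (by positivity) (by nlinarith) le_rfl
      sn cn dn _ _ _ hsn hcn hdn hsder hcder hdder
    · intro u
      refine ⟨hsn1 u, hcn1 u, ?_, ?_, ?_, ?_⟩
      · rw [abs_of_pos (hdnpos u)]; exact hdnle u
      · exact Real.abs_sin_le_one _
      · exact Real.abs_cos_le_one _
      · rw [abs_of_nonneg (Real.sqrt_nonneg _)]; exact hΔle _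
    · rw [hG0, Real.sin_zero, hsn0]
    · rw [hG0, Real.cos_zero, hcn0]
    · rw [hG0, hdn0, Real.sin_zero]
      norm_num
  have hsnK : sn (ellK k) = 1 := by
    rw [(heq _ hKpos.le).1, hGK, Real.sin_pi_div_two]
  have hcnK : cn (ellK k) = 0 := by
    rw [(heq _ hKpos.le).2.1, hGK, Real.cos_pi_div_two]
  have hdnK : dn (ellK k) = q := by
    rw [(heq _ hKpos.le).2.2, hGK, Real.sin_pi_div_two]
    norm_num
    exact hqdef.symm
  -- second uniqueness application: the K-u symmetry
  have hManti : (1:ℝ) ≤ 1/q := one_le_one_div hq0 hq1.le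
  have hKu : ∀ u : ℝ, HasDerivAt (fun u : ℝ => ellK k - u) (-1) u :=
    fun u => (hasDerivAt_id' (x := u)).const_sub (ellK k)
  have hcnc : ∀ u, HasDerivAt (fun u => cn (ellK k - u))
      (sn (ellK k - u) * dn (ellK k - u)) u := by
    intro u
    have h := (hcn (ellK k - u)).comp u (hKu u)
    refine HasDerivAt.congr_deriv h ?_
    ring
  have hsnc : ∀ u, HasDerivAt (fun u => sn (ellK k - u))
      (-(cn (ellK k - u) * dn (ellK k - u))) u := by
    intro u
    have h := (hsn (ellK k - u)).comp u (hKu u)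
    refine HasDerivAt.congr_deriv h ?_
    ring
  have hdnc : ∀ u, HasDerivAt (fun u => dn (ellK k - u))
      (k^2 * sn (ellK k - u) * cn (ellK k - u)) u := by
    intro u
    have h := (hdn (ellK k - u)).comp u (hKu u)
    refine HasDerivAt.congr_deriv h ?_
    ring
  have hg1der : ∀ u, HasDerivAt (fun u => cn (ellK k - u) / dn (ellK k - u))
      ((q * sn (ellK k - u) / dn (ellK k - u)) * (q / dn (ellK k - u))) u := by
    intro u
    have h := (hcnc u).div (hdnc u) (hdnne _)
    refine HasDerivAt.congr_deriv h ?_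
    have hnum : sn (ellK k - u) * dn (ellK k - u) * dn (ellK k - u)
        - cn (ellK k - u) * (k^2 * sn (ellK k - u) * cn (ellK k - u))
        = q^2 * sn (ellK k - u) := by
      linear_combination sn (ellK k - u) * hI2 (ellK k - u)
        - k^2 * sn (ellK k - u) * hI1 (ellK k - u) - sn (ellK k - u) * hqsq
    rw [hnum]
    field_simp [hdnne (ellK k - u)]
  have hg2der : ∀ u, HasDerivAt (fun u => q * sn (ellK k - u) / dn (ellK k - u))
      (-((cn (ellK k - u) / dn (ellK k - u)) * (q / dn (ellK k - u)))) u := by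
    intro u
    have h := ((hsnc u).const_mul q).div (hdnc u) (hdnne _)
    refine HasDerivAt.congr_deriv h ?_
    have hnum : q * -(cn (ellK k - u) * dn (ellK k - u)) * dn (ellK k - u)
        - q * sn (ellK k - u) * (k^2 * sn (ellK k - u) * cn (ellK k - u))
        = -(q * cn (ellK k - u)) := by
      linear_combination (-(q * cn (ellK k - u))) * hI2 (ellK k - u)
    rw [hnum]
    field_simp [hdnne (ellK k - u)]
  have hg3der : ∀ u, HasDerivAt (fun u => q / dn (ellK k - u))
      (-(k^2 * (cn (ellK k - u) / dn (ellK k - u))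
        * (q * sn (ellK k - u) / dn (ellK k - u)))) u := by
    intro u
    have h := (hasDerivAt_const u q).div (hdnc u) (hdnne _)
    refine HasDerivAt.congr_deriv h ?_
    field_simp [hdnne (ellK k - u)]
    ring
  have hsym : ∀ u, 0 ≤ u → sn u = cn (ellK k - u) / dn (ellK k - u) ∧
      cn u = q * sn (ellK k - u) / dn (ellK k - u) ∧
      dn u = q / dn (ellK k - u) := by
    apply ode_triple_unique (k^2) (1/q) (by positivity) (by nlinarith) hManti
      sn cn dn _ _ _ hsn hcn hdn hg1der hg2der hg3der
    · intro u
      have habs : ∀ y : ℝ, |y| ≤ 1 → |y| ≤ 1/q := fun y hy => le_trans hy hManti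
      refine ⟨habs _ (hsn1 u), habs _ (hcn1 u), ?_, ?_, ?_, ?_⟩
      · rw [abs_of_pos (hdnpos u)]; exact le_trans (hdnle u) hManti
      · rw [abs_div, abs_of_pos (hdnpos _)]
        exact div_le_div₀ zero_le_one (hcn1 _) hq0 (hdnge _)
      · rw [abs_div, abs_mul, abs_of_pos hq0, abs_of_pos (hdnpos _)]
        refine div_le_div₀ zero_le_one ?_ hq0 (hdnge _)
        nlinarith [hsn1 (ellK k - u), abs_nonneg (sn (ellK k - u))]
      · rw [abs_div, abs_of_pos hq0, abs_of_pos (hdnpos _)]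
        exact div_le_div₀ zero_le_one hq1.le hq0 (hdnge _)
    · rw [sub_zero, hcnK, hsn0, zero_div]
    · rw [sub_zero, hsnK, hdnK, hcn0, mul_one, div_self (ne_of_gt hq0)]
    · rw [sub_zero, hdnK, hdn0, div_self (ne_of_gt hq0)]
  have hdnsym : ∀ v, 0 ≤ v → v ≤ ellK k → dn (ellK k - v) = q / dn v := by
    intro v h0 hvK
    have h := (hsym (ellK k - v) (by linarith)).2.2
    rw [show ellK k - (ellK k - v) = v by ring] at h
    exact h
  have hdnhalf : dn (ellK k / 2)^2 = q := by
    have h := hdnsym (ellK k / 2) (by linarith) (by linarith)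
    rw [show ellK k - ellK k/2 = ellK k/2 by ring] at h
    rw [eq_div_iff (hdnne _)] at h
    rw [sq]; exact h
  have hdncont : Continuous dn := Differentiable.continuous (fun x => (hdn x).differentiableAt)
  have hdn2cont : Continuous (fun v : ℝ => dn v^2) := hdncont.pow 2
  have hh : ∀ u : ℝ, HasDerivAt (fun u => ∫ v in (0:ℝ)..u, dn v^2) (dn u^2) u := by
    intro u
    exact intervalIntegral.integral_hasDerivAt_right (hdn2cont.intervalIntegrable _ _)
      (hdn2cont.stronglyMeasurableAtFilter _ _) hdn2cont.continuousAt
  have hρcont : Continuous (fun θ : ℝ => 1 / Real.sqrt (1 - k^2 * Real.sin θ^2)) := by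
    apply continuous_const.div
      (Real.continuous_sqrt.comp (continuous_const.sub (continuous_const.mul
        (Real.continuous_sin.pow 2))))
    intro θ; exact ne_of_gt (Real.sqrt_pos.2 (hpos' θ))
  have hF : ∀ x : ℝ, HasDerivAt
      (fun x => ∫ t in (0:ℝ)..x, 1 / Real.sqrt (1 - k^2 * Real.sin t^2))
      (1 / Real.sqrt (1 - k^2 * Real.sin x^2)) x := by
    intro x
    exact intervalIntegral.integral_hasDerivAt_right (hρcont.intervalIntegrable _ _)
      (hρcont.stronglyMeasurableAtFilter _ _) hρcont.continuousAt
  have hFnonneg : ∀ x : ℝ, 0 ≤ x →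
      0 ≤ ∫ t in (0:ℝ)..x, 1 / Real.sqrt (1 - k^2 * Real.sin t^2) := by
    intro x hx
    by_contra h
    push_neg at h
    have h2 := hGmono h
    rw [hGF x, hG0] at h2
    linarith
  have hEint : (∫ v in (0:ℝ)..(ellK k), dn v^2) = ellE k := by
    have hcv := intervalIntegral.integral_comp_smul_deriv
      (f := fun x => ∫ t in (0:ℝ)..x, 1 / Real.sqrt (1 - k^2 * Real.sin t^2))
      (f' := fun x => 1 / Real.sqrt (1 - k^2 * Real.sin x^2))
      (g := fun u => dn u^2) (a := 0) (b := π/2)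
      (fun x _ => hF x) (hρcont.continuousOn) hdn2cont
    have hL : Set.EqOn
        (fun x => (1 / Real.sqrt (1 - k^2 * Real.sin x^2)) •
          ((fun u => dn u^2) ∘ (fun x => ∫ t in (0:ℝ)..x, 1 / Real.sqrt (1 - k^2 * Real.sin t^2))) x)
        (fun x => Real.sqrt (1 - k^2 * Real.sin x^2))
        (Set.uIcc (0:ℝ) (π/2)) := by
      intro x hx
      rw [Set.uIcc_of_le (by positivity)] at hx
      have hFx0 : 0 ≤ ∫ t in (0:ℝ)..x, 1 / Real.sqrt (1 - k^2 * Real.sin t^2) :=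
        hFnonneg x hx.1
      have hdnFx := (heq _ hFx0).2.2
      simp only [Function.comp_apply, smul_eq_mul]
      rw [hdnFx, hGF x]
      rw [Real.sq_sqrt (hpos' x).le, one_div, inv_mul_eq_div, Real.div_sqrt]
    rw [intervalIntegral.integral_congr hL] at hcv
    beta_reduce at hcv
    rw [show (∫ t in (0:ℝ)..(0:ℝ), 1 / Real.sqrt (1 - k^2 * Real.sin t^2)) = 0
      from intervalIntegral.integral_same] at hcv
    rw [← hKF] at hcv
    exact hcv.symm
  -- derivative of psi = k^2 sn cn / dn
  have hψ : ∀ u, HasDerivAt (fun u => k^2 * sn u * cn u / dn u)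
      (dn u^2 - q^2/dn u^2) u := by
    intro u
    have h1 := (((hsn u).const_mul (k^2)).mul (hcn u))
    have h2 := h1.div (hdn u) (hdnne u)
    refine HasDerivAt.congr_deriv h2 ?_
    have hnum : (k^2 * (cn u * dn u) * cn u + k^2 * sn u * -(sn u * dn u)) * dn u
        - k^2 * sn u * cn u * -(k^2 * sn u * cn u) = dn u^4 - q^2 := by
      linear_combination (k^2*(k^2*sn u^2 + dn u^2)) * hI1 u
        - (1 - k^2 + k^2*sn u^2 + dn u^2) * hI2 u + hqsq
    have hgoal : dn u^2 - q^2/dn u^2 = (dn u^4 - q^2)/dn u^2 := by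
      rw [eq_div_iff (pow_ne_zero 2 (hdnne u)), sub_mul,
        div_mul_cancel₀ _ (pow_ne_zero 2 (hdnne u))]
      ring
    rw [hgoal]
    congr 1
  -- derivative of g
  have hgder : ∀ u, HasDerivAt
      (fun u => 2 * ((∫ v in (0:ℝ)..u, dn v^2) - u * ellE k / ellK k)
        - k^2 * sn u * cn u / dn u)
      (dn u^2 + q^2/dn u^2 - 2*(ellE k/ellK k)) u := by
    intro u
    have h0 : (fun u : ℝ => u * ellE k / ellK k) = fun u : ℝ => u * (ellE k / ellK k) := by
      funext x; ring
    have h1 : HasDerivAt (fun u : ℝ => u * ellE k / ellK k) (ellE k / ellK k) u := by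
      rw [h0]
      simpa using (hasDerivAt_id' (x := u)).mul_const (ellE k / ellK k)
    have h2 := ((hh u).sub h1).const_mul 2
    have h3 := h2.sub (hψ u)
    refine HasDerivAt.congr_deriv h3 ?_
    ring
  -- g vanishes at both endpoints
  have hψ0 : k^2 * sn 0 * cn 0 / dn 0 = 0 := by rw [hsn0]; ring
  have hg0 : 2 * ((∫ v in (0:ℝ)..(0:ℝ), dn v^2) - 0 * ellE k / ellK k)
      - k^2 * sn 0 * cn 0 / dn 0 = 0 := by
    rw [intervalIntegral.integral_same, hψ0]
    ring
  have hcontψ' : Continuous (fun u => dn u^2 - q^2/dn u^2) :=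
    hdn2cont.sub (continuous_const.div hdn2cont (fun u => pow_ne_zero 2 (hdnne u)))
  have hψKhalf : k^2 * sn (ellK k/2) * cn (ellK k/2) / dn (ellK k/2)
      = ∫ u in (0:ℝ)..(ellK k/2), (dn u^2 - q^2/dn u^2) := by
    have h := intervalIntegral.integral_eq_sub_of_hasDerivAt
      (f := fun u => k^2 * sn u * cn u / dn u)
      (f' := fun u => dn u^2 - q^2/dn u^2) (a := 0) (b := ellK k/2)
      (fun x _ => hψ x) (hcontψ'.intervalIntegrable _ _)
    beta_reduce at h
    rw [h, hψ0, sub_zero]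
  have hsplit : (∫ u in (0:ℝ)..(ellK k/2), (dn u^2 - q^2/dn u^2))
      = (∫ u in (0:ℝ)..(ellK k/2), dn u^2) - ∫ u in (0:ℝ)..(ellK k/2), q^2/dn u^2 :=
    intervalIntegral.integral_sub (hdn2cont.intervalIntegrable _ _)
      ((continuous_const.div hdn2cont (fun u => pow_ne_zero 2 (hdnne u))).intervalIntegrable _ _)
  have hqd : Set.EqOn (fun u => q^2/dn u^2) (fun u => (fun v => dn v^2) (ellK k - u))
      (Set.uIcc (0:ℝ) (ellK k/2)) := by
    intro u hu
    rw [Set.uIcc_of_le (by linarith)] at hu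
    have h := hdnsym u hu.1 (by linarith [hu.2])
    simp only
    rw [h, div_pow]
  have hswap : (∫ u in (0:ℝ)..(ellK k/2), q^2/dn u^2)
      = ∫ u in (ellK k/2)..(ellK k), dn u^2 := by
    rw [intervalIntegral.integral_congr hqd]
    rw [intervalIntegral.integral_comp_sub_left (fun v => dn v^2) (ellK k)]
    rw [show ellK k - ellK k/2 = ellK k/2 by ring, sub_zero]
  have hadd : (∫ u in (0:ℝ)..(ellK k/2), dn u^2) + (∫ u in (ellK k/2)..(ellK k), dn u^2)
      = ∫ u in (0:ℝ)..(ellK k), dn u^2 :=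
    intervalIntegral.integral_add_adjacent_intervals (hdn2cont.intervalIntegrable _ _)
      (hdn2cont.intervalIntegrable _ _)
  have hgKhalf : 2 * ((∫ v in (0:ℝ)..(ellK k/2), dn v^2) - (ellK k/2) * ellE k / ellK k)
      - k^2 * sn (ellK k/2) * cn (ellK k/2) / dn (ellK k/2) = 0 := by
    rw [hψKhalf, hsplit, hswap]
    have hEK : (ellK k/2) * ellE k / ellK k = ellE k / 2 := by
      field_simp
    rw [hEK]
    rw [hEint] at hadd
    linarith [hadd]
  -- positivity of sn, cn on (0, K)
  have hsc : ∀ u, 0 < u → u < ellK k → 0 < sn u ∧ 0 < cn u := by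
    intro u h0 hK
    have hg1 : 0 < G u := by rw [← hG0]; exact hGmono h0
    have hg2 : G u < π/2 := by rw [← hGK]; exact hGmono hK
    constructor
    · rw [(heq u h0.le).1]
      exact Real.sin_pos_of_pos_of_lt_pi hg1 (by linarith [pi_pos])
    · rw [(heq u h0.le).2.1]
      exact Real.cos_pos_of_mem_Ioo ⟨by linarith [pi_pos], hg2⟩
  have hdnanti : StrictAntiOn dn (Set.Icc 0 (ellK k/2)) := by
    apply strictAntiOn_of_deriv_neg (convex_Icc _ _) hdncont.continuousOn
    intro x hx
    rw [interior_Icc] at hx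
    rw [(hdn x).deriv]
    obtain ⟨hs, hc⟩ := hsc x hx.1 (by linarith [hx.2, hKpos])
    nlinarith [mul_pos hs hc, pow_pos hk0 2]
  have hdnq : ∀ u ∈ Set.Icc (0:ℝ) (ellK k/2), q ≤ dn u^2 := by
    intro u hu
    rcases eq_or_lt_of_le hu.2 with h | h
    · rw [h, hdnhalf]
    · have h2 := hdnanti hu (Set.right_mem_Icc.2 (by linarith)) h
      nlinarith [hdnpos u, hdnpos (ellK k/2), hdnhalf]
  set gf : ℝ → ℝ := fun u => 2 * ((∫ v in (0:ℝ)..u, dn v^2) - u * ellE k / ellK k)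
        - k^2 * sn u * cn u / dn u with hgf
  have hganti : StrictAntiOn (deriv gf) (Set.Icc 0 (ellK k/2)) := by
    intro x hx y hy hxy
    rw [(hgder x).deriv, (hgder y).deriv]
    have hdxy : dn y < dn x := hdnanti hx hy hxy
    have hqx : q ≤ dn x^2 := hdnq x hx
    have hqy : q ≤ dn y^2 := hdnq y hy
    have hx2 : 0 < dn x^2 := pow_pos (hdnpos x) 2
    have hy2 : 0 < dn y^2 := pow_pos (hdnpos y) 2
    have hxy2 : dn y^2 < dn x^2 := by nlinarith [hdnpos x, hdnpos y]
    have hprod : q^2 < dn x^2 * dn y^2 := by nlinarith [hq1, hq0]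
    have hkey : 0 < (dn x^2 - dn y^2) * (dn x^2 * dn y^2 - q^2) :=
      mul_pos (by linarith) (by linarith)
    have hexpand : (dn x^2 + q^2/dn x^2) - (dn y^2 + q^2/dn y^2)
        = (dn x^2 - dn y^2) * (dn x^2 * dn y^2 - q^2) / (dn x^2 * dn y^2) := by
      field_simp [hdnne x, hdnne y]
      ring
    have hdiv := div_pos hkey (mul_pos hx2 hy2)
    linarith [hdiv, hexpand]
  have hconc : StrictConcaveOn ℝ (Set.Icc 0 (ellK k/2)) gf :=
    StrictAntiOn.strictConcaveOn_of_deriv (convex_Icc _ _)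
      (Continuous.continuousOn
        (Differentiable.continuous (fun u => (hgder u).differentiableAt)))
      (by rw [interior_Icc]; exact hganti.mono Set.Ioo_subset_Icc_self)
  have hgpos : ∀ u ∈ Set.Ioo (0:ℝ) (ellK k/2), 0 < gf u := by
    intro u hu
    have h0mem : (0:ℝ) ∈ Set.Icc (0:ℝ) (ellK k/2) := Set.left_mem_Icc.2 (by linarith)
    have hKmem : ellK k/2 ∈ Set.Icc (0:ℝ) (ellK k/2) := Set.right_mem_Icc.2 (by linarith)
    have hne : (0:ℝ) ≠ ellK k/2 := by
      have := hu.1; have := hu.2; intro hcon; rw [← hcon] at this; linarith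
    have ht0 : 0 < u / (ellK k/2) := div_pos hu.1 (by linarith [hu.1, hu.2])
    have ht1 : u / (ellK k/2) < 1 := (div_lt_one (by linarith [hu.1, hu.2])).2 hu.2
    have h := hconc.2 h0mem hKmem hne
      (show (0:ℝ) < 1 - u / (ellK k/2) by linarith) ht0 (by ring)
    have hgf0 : gf 0 = 0 := hg0
    have hgfK : gf (ellK k/2) = 0 := hgKhalf
    rw [smul_eq_mul, smul_eq_mul, smul_eq_mul, smul_eq_mul, hgf0, hgfK] at h
    rw [show (1 - u / (ellK k/2)) * (0:ℝ) + u / (ellK k/2) * (ellK k/2) = u by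
      field_simp; ring] at h
    simpa using h
  constructor
  · apply strictMonoOn_of_deriv_pos (convex_Icc _ _)
    · exact Continuous.continuousOn (hdn2cont.mul
        ((Differentiable.continuous (fun x => (hΘ x).differentiableAt)).pow 4))
    · intro x hx
      rw [interior_Icc] at hx
      have hD : HasDerivAt (fun u => dn u^2 * Θ u^4)
          ((2*dn x*(-(k^2*sn x*cn x)))*Θ x^4
            + dn x^2*(4*Θ x^3*(((∫ v in (0:ℝ)..x, dn v^2) - x*ellE k/ellK k)*Θ x))) x := by
        have h1 := ((hdn x).pow 2).mul ((hΘ x).pow 4)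
        refine HasDerivAt.congr_deriv h1 ?_
        push_cast; simp only [Pi.sub_apply, Pi.pow_apply, Pi.mul_apply, Pi.add_apply]; ring
      rw [hD.deriv]
      have hgp := hgpos x hx
      have hb : gf x = 2*((∫ v in (0:ℝ)..x, dn v^2) - x*ellE k/ellK k)
          - k^2*sn x*cn x/dn x := rfl
      have hrw : (2*dn x*(-(k^2*sn x*cn x)))*Θ x^4
          + dn x^2*(4*Θ x^3*(((∫ v in (0:ℝ)..x, dn v^2) - x*ellE k/ellK k)*Θ x))
          = 2*Θ x^4*dn x^2*gf x := by
        rw [hb]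
        field_simp [hdnne x, ne_of_gt hKpos]
        ring
      rw [hrw]
      have hθp := hΘpos x
      have hdp := hdnpos x
      have h2 : 0 < 2*Θ x^4*dn x^2 := by positivity
      exact mul_pos h2 hgp
  · intro u hu
    exact hgpos u hu
end

section
/- For 0 < k < 1, the function g(u) = 2·zn(u) − k²·sn(u)·cn(u)/dn(u) satisfies g(0) = g(K/2) = 0 and g''(u) = −(2k⁴·sn(u)·cn(u)/dn³(u))·(cn(u)·dn(u) + k'·sn(u))·(cn(u)·dn(u) − k'·sn(u)) < 0 on (0, K/2); consequently g(u) > 0 on (0, K/2). -/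
open Real intervalIntegral

section Aux
variable {k : ℝ} {sn cn dn : ℝ → ℝ}

theorem my_const (f : ℝ → ℝ) (hf : ∀ u, HasDerivAt f 0 u) (x : ℝ) : f x = f 0 :=
  is_const_of_deriv_eq_zero (fun u => (hf u).differentiableAt) (fun u => (hf u).deriv) x 0

theorem pyth (hsn0 : sn 0 = 0) (hcn0 : cn 0 = 1)
    (hsn : ∀ u : ℝ, HasDerivAt sn (cn u * dn u) u)
    (hcn : ∀ u : ℝ, HasDerivAt cn (-(sn u * dn u)) u) (u : ℝ) :
    sn u ^ 2 + cn u ^ 2 = 1 := by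
  have h := my_const (fun u => sn u ^ 2 + cn u ^ 2) (fun u => by
    have := ((hsn u).fun_pow 2).fun_add ((hcn u).fun_pow 2)
    exact this.congr_deriv (by ring)) u
  simp only [hsn0, hcn0] at h
  norm_num at h
  exact h

theorem dnsq (hsn0 : sn 0 = 0) (hdn0 : dn 0 = 1)
    (hsn : ∀ u : ℝ, HasDerivAt sn (cn u * dn u) u)
    (hdn : ∀ u : ℝ, HasDerivAt dn (-(k^2 * sn u * cn u)) u) (u : ℝ) :
    dn u ^ 2 = 1 - k^2 * sn u ^ 2 := by
  have h := my_const (fun u => dn u ^ 2 + k^2 * sn u ^ 2) (fun u => by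
    have := ((hdn u).fun_pow 2).fun_add ((HasDerivAt.const_mul (k^2) ((hsn u).fun_pow 2)))
    exact this.congr_deriv (by ring)) u
  simp only [hsn0, hdn0] at h
  norm_num at h
  linarith

end Aux

section Aux2
variable {k : ℝ} {sn cn dn : ℝ → ℝ}

theorem dn_pos (hk1 : k < 1) (hk0 : 0 < k) (hsn0 : sn 0 = 0) (hcn0 : cn 0 = 1) (hdn0 : dn 0 = 1)
    (hsn : ∀ u : ℝ, HasDerivAt sn (cn u * dn u) u)
    (hcn : ∀ u : ℝ, HasDerivAt cn (-(sn u * dn u)) u)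
    (hdn : ∀ u : ℝ, HasDerivAt dn (-(k^2 * sn u * cn u)) u) (u : ℝ) :
    0 < dn u := by
  by_contra hle
  push_neg at hle
  have hcont : ContinuousOn dn (Set.uIcc 0 u) :=
    (fun x _ => (hdn x).differentiableAt.continuousAt.continuousWithinAt)
  have h0 : (0:ℝ) ∈ Set.uIcc (dn 0) (dn u) := by
    rw [hdn0]
    exact Set.mem_uIcc.mpr (Or.inr ⟨hle, zero_le_one⟩)
  obtain ⟨c, _, hc⟩ := intermediate_value_uIcc hcont h0
  have h1 := dnsq hsn0 hdn0 hsn hdn c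
  have h2 := pyth hsn0 hcn0 hsn hcn c
  rw [hc] at h1
  nlinarith [sq_nonneg (cn c), sq_nonneg (sn c)]

theorem dn_ge (hk1 : k < 1) (hk0 : 0 < k) (hsn0 : sn 0 = 0) (hcn0 : cn 0 = 1) (hdn0 : dn 0 = 1)
    (hsn : ∀ u : ℝ, HasDerivAt sn (cn u * dn u) u)
    (hcn : ∀ u : ℝ, HasDerivAt cn (-(sn u * dn u)) u)
    (hdn : ∀ u : ℝ, HasDerivAt dn (-(k^2 * sn u * cn u)) u) (u : ℝ) :
    Real.sqrt (1 - k^2) ≤ dn u := by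
  have h1 := dnsq hsn0 hdn0 hsn hdn u
  have h2 := pyth hsn0 hcn0 hsn hcn u
  have h3 := dn_pos hk1 hk0 hsn0 hcn0 hdn0 hsn hcn hdn u
  have : Real.sqrt (1 - k^2) ≤ Real.sqrt (dn u ^ 2) := by
    apply Real.sqrt_le_sqrt
    nlinarith [sq_nonneg (cn u)]
  rwa [Real.sqrt_sq h3.le] at this

end Aux2

section Aux3
variable {k : ℝ} {sn cn dn : ℝ → ℝ}

theorem phi_deriv (hdn : ∀ u : ℝ, HasDerivAt dn (-(k^2 * sn u * cn u)) u) (u : ℝ) :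
    HasDerivAt (fun u => ∫ v in (0:ℝ)..u, dn v) (dn u) u := by
  have hcont : Continuous dn := by
    have : Differentiable ℝ dn := fun x => (hdn x).differentiableAt
    exact this.continuous
  exact (hcont.integral_hasStrictDerivAt 0 u).hasDerivAt

theorem trig (hsn0 : sn 0 = 0) (hcn0 : cn 0 = 1)
    (hsn : ∀ u : ℝ, HasDerivAt sn (cn u * dn u) u)
    (hcn : ∀ u : ℝ, HasDerivAt cn (-(sn u * dn u)) u)
    (hdn : ∀ u : ℝ, HasDerivAt dn (-(k^2 * sn u * cn u)) u) (u : ℝ) :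
    sn u = Real.sin (∫ v in (0:ℝ)..u, dn v) ∧ cn u = Real.cos (∫ v in (0:ℝ)..u, dn v) := by
  set ph : ℝ → ℝ := fun u => ∫ v in (0:ℝ)..u, dn v with hph
  have hphd : ∀ u, HasDerivAt ph (dn u) u := phi_deriv hdn
  have hW : ∀ u, HasDerivAt
      (fun u => (sn u - Real.sin (ph u))^2 + (cn u - Real.cos (ph u))^2) 0 u := by
    intro u
    have h1 : HasDerivAt (fun u => Real.sin (ph u)) (Real.cos (ph u) * dn u) u :=
      (Real.hasDerivAt_sin (ph u)).comp u (hphd u)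
    have h2 : HasDerivAt (fun u => Real.cos (ph u)) (-Real.sin (ph u) * dn u) u :=
      (Real.hasDerivAt_cos (ph u)).comp u (hphd u)
    have := (((hsn u).fun_sub h1).fun_pow 2).fun_add (((hcn u).fun_sub h2).fun_pow 2)
    exact this.congr_deriv (by ring)
  have h := my_const _ hW u
  simp only [hsn0, hcn0, hph] at h
  rw [intervalIntegral.integral_same] at h
  simp [Real.sin_zero, Real.cos_zero] at h
  constructor <;> nlinarith [sq_nonneg (sn u - Real.sin (ph u)), sq_nonneg (cn u - Real.cos (ph u))]

end Aux3

section Aux4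
variable {k : ℝ} {sn cn dn : ℝ → ℝ}

theorem int_pos (hk1 : k < 1) (hk0 : 0 < k) (θ : ℝ) : 0 < 1 - k^2 * Real.sin θ ^ 2 := by
  nlinarith [Real.sin_sq_le_one θ, sq_nonneg (Real.sin θ)]

theorem F_deriv (hk1 : k < 1) (hk0 : 0 < k) (x : ℝ) :
    HasDerivAt (fun x : ℝ => ∫ θ in (0:ℝ)..x, 1 / Real.sqrt (1 - k^2 * Real.sin θ ^ 2))
      (1 / Real.sqrt (1 - k^2 * Real.sin x ^ 2)) x := by
  have hcont : Continuous fun θ : ℝ => 1 / Real.sqrt (1 - k^2 * Real.sin θ ^ 2) := by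
    apply continuous_const.div
    · exact (continuous_const.sub (continuous_const.mul (Real.continuous_sin.pow 2))).sqrt
    · intro θ
      exact (Real.sqrt_pos.mpr (int_pos hk1 hk0 θ)).ne'
  exact (hcont.integral_hasStrictDerivAt 0 x).hasDerivAt

theorem F_mono (hk1 : k < 1) (hk0 : 0 < k) :
    StrictMono (fun x : ℝ => ∫ θ in (0:ℝ)..x, 1 / Real.sqrt (1 - k^2 * Real.sin θ ^ 2)) := by
  apply strictMono_of_deriv_pos
  intro x
  rw [(F_deriv hk1 hk0 x).deriv]
  exact div_pos one_pos (Real.sqrt_pos.mpr (int_pos hk1 hk0 x))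

theorem dn_eq_sqrt (hk1 : k < 1) (hk0 : 0 < k) (hsn0 : sn 0 = 0) (hcn0 : cn 0 = 1) (hdn0 : dn 0 = 1)
    (hsn : ∀ u : ℝ, HasDerivAt sn (cn u * dn u) u)
    (hcn : ∀ u : ℝ, HasDerivAt cn (-(sn u * dn u)) u)
    (hdn : ∀ u : ℝ, HasDerivAt dn (-(k^2 * sn u * cn u)) u) (u : ℝ) :
    dn u = Real.sqrt (1 - k^2 * Real.sin (∫ v in (0:ℝ)..u, dn v) ^ 2) := by
  have h1 := dnsq hsn0 hdn0 hsn hdn u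
  have h2 := (trig hsn0 hcn0 hsn hcn hdn u).1
  have h3 := dn_pos hk1 hk0 hsn0 hcn0 hdn0 hsn hcn hdn u
  rw [← h2, ← h1, Real.sqrt_sq h3.le]

theorem F_phi (hk1 : k < 1) (hk0 : 0 < k) (hsn0 : sn 0 = 0) (hcn0 : cn 0 = 1) (hdn0 : dn 0 = 1)
    (hsn : ∀ u : ℝ, HasDerivAt sn (cn u * dn u) u)
    (hcn : ∀ u : ℝ, HasDerivAt cn (-(sn u * dn u)) u)
    (hdn : ∀ u : ℝ, HasDerivAt dn (-(k^2 * sn u * cn u)) u) (u : ℝ) :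
    (∫ θ in (0:ℝ)..(∫ v in (0:ℝ)..u, dn v), 1 / Real.sqrt (1 - k^2 * Real.sin θ ^ 2)) = u := by
  have h := my_const (fun w : ℝ =>
      (∫ θ in (0:ℝ)..(∫ v in (0:ℝ)..w, dn v), 1 / Real.sqrt (1 - k^2 * Real.sin θ ^ 2)) - w)
    (fun u => by
      have hc := (F_deriv hk1 hk0 (∫ v in (0:ℝ)..u, dn v)).comp u
        (phi_deriv (sn := sn) (cn := cn) hdn u)
      have h4 := dn_eq_sqrt hk1 hk0 hsn0 hcn0 hdn0 hsn hcn hdn u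
      have h3 := dn_pos hk1 hk0 hsn0 hcn0 hdn0 hsn hcn hdn u
      have h5 := hc.sub (hasDerivAt_id u)
      have heq : (1 / Real.sqrt (1 - k^2 * Real.sin (∫ v in (0:ℝ)..u, dn v) ^ 2)) * dn u - 1
          = 0 := by
        rw [← h4]; field_simp; ring
      rw [heq] at h5
      exact h5) u
  simp only [intervalIntegral.integral_same] at h
  simp at h
  simp only [one_div]
  linarith

end Aux4

section Aux5
variable {k : ℝ} {sn cn dn : ℝ → ℝ}

theorem ellK_eq (k : ℝ) : ellK k =
    (fun x : ℝ => ∫ θ in (0:ℝ)..x, 1 / Real.sqrt (1 - k^2 * Real.sin θ ^ 2)) (π/2) := rfl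

theorem ellK_pos (hk1 : k < 1) (hk0 : 0 < k) : 0 < ellK k := by
  have h := F_mono hk1 hk0 (half_pos Real.pi_pos)
  simp only [intervalIntegral.integral_same] at h
  rw [ellK_eq k]
  exact h

theorem phi_ellK (hk1 : k < 1) (hk0 : 0 < k) (hsn0 : sn 0 = 0) (hcn0 : cn 0 = 1) (hdn0 : dn 0 = 1)
    (hsn : ∀ u : ℝ, HasDerivAt sn (cn u * dn u) u)
    (hcn : ∀ u : ℝ, HasDerivAt cn (-(sn u * dn u)) u)
    (hdn : ∀ u : ℝ, HasDerivAt dn (-(k^2 * sn u * cn u)) u) :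
    (∫ v in (0:ℝ)..(ellK k), dn v) = π/2 := by
  apply (F_mono hk1 hk0).injective
  have h1 := F_phi hk1 hk0 hsn0 hcn0 hdn0 hsn hcn hdn (ellK k)
  simp only [] at h1 ⊢
  rw [h1, ellK_eq k]

theorem sn_ellK (hk1 : k < 1) (hk0 : 0 < k) (hsn0 : sn 0 = 0) (hcn0 : cn 0 = 1) (hdn0 : dn 0 = 1)
    (hsn : ∀ u : ℝ, HasDerivAt sn (cn u * dn u) u)
    (hcn : ∀ u : ℝ, HasDerivAt cn (-(sn u * dn u)) u)
    (hdn : ∀ u : ℝ, HasDerivAt dn (-(k^2 * sn u * cn u)) u) :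
    sn (ellK k) = 1 ∧ cn (ellK k) = 0 ∧ dn (ellK k) = Real.sqrt (1 - k^2) := by
  have h1 := trig hsn0 hcn0 hsn hcn hdn (ellK k)
  have h2 := phi_ellK hk1 hk0 hsn0 hcn0 hdn0 hsn hcn hdn
  have h3 := dn_eq_sqrt hk1 hk0 hsn0 hcn0 hdn0 hsn hcn hdn (ellK k)
  rw [h2] at h1 h3
  refine ⟨?_, ?_, ?_⟩
  · rw [h1.1, Real.sin_pi_div_two]
  · rw [h1.2, Real.cos_pi_div_two]
  · rw [h3, Real.sin_pi_div_two]; norm_num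

theorem phi_mono (hk1 : k < 1) (hk0 : 0 < k) (hsn0 : sn 0 = 0) (hcn0 : cn 0 = 1) (hdn0 : dn 0 = 1)
    (hsn : ∀ u : ℝ, HasDerivAt sn (cn u * dn u) u)
    (hcn : ∀ u : ℝ, HasDerivAt cn (-(sn u * dn u)) u)
    (hdn : ∀ u : ℝ, HasDerivAt dn (-(k^2 * sn u * cn u)) u) :
    StrictMono (fun u : ℝ => ∫ v in (0:ℝ)..u, dn v) := by
  apply strictMono_of_deriv_pos
  intro x
  rw [(phi_deriv (sn := sn) (cn := cn) hdn x).deriv]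
  exact dn_pos hk1 hk0 hsn0 hcn0 hdn0 hsn hcn hdn x

theorem sncn_pos (hk1 : k < 1) (hk0 : 0 < k) (hsn0 : sn 0 = 0) (hcn0 : cn 0 = 1) (hdn0 : dn 0 = 1)
    (hsn : ∀ u : ℝ, HasDerivAt sn (cn u * dn u) u)
    (hcn : ∀ u : ℝ, HasDerivAt cn (-(sn u * dn u)) u)
    (hdn : ∀ u : ℝ, HasDerivAt dn (-(k^2 * sn u * cn u)) u)
    {u : ℝ} (hu0 : 0 < u) (hu1 : u < ellK k) : 0 < sn u ∧ 0 < cn u := by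
  have hmono := phi_mono hk1 hk0 hsn0 hcn0 hdn0 hsn hcn hdn
  have hK := phi_ellK hk1 hk0 hsn0 hcn0 hdn0 hsn hcn hdn
  have hlo : (0:ℝ) < ∫ v in (0:ℝ)..u, dn v := by
    have := hmono hu0
    simpa [intervalIntegral.integral_same] using this
  have hhi : (∫ v in (0:ℝ)..u, dn v) < π/2 := by
    have := hmono hu1
    simpa [hK] using this
  have h1 := trig hsn0 hcn0 hsn hcn hdn u
  constructor
  · rw [h1.1]
    exact Real.sin_pos_of_pos_of_lt_pi hlo (lt_trans hhi (by linarith [Real.pi_pos]))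
  · rw [h1.2]
    exact Real.cos_pos_of_mem_Ioo ⟨by linarith [Real.pi_pos], hhi⟩

end Aux5

section Aux6
variable {k : ℝ} {sn cn dn : ℝ → ℝ}

theorem sym (hk1 : k < 1) (hk0 : 0 < k) (hsn0 : sn 0 = 0) (hcn0 : cn 0 = 1) (hdn0 : dn 0 = 1)
    (hsn : ∀ u : ℝ, HasDerivAt sn (cn u * dn u) u)
    (hcn : ∀ u : ℝ, HasDerivAt cn (-(sn u * dn u)) u)
    (hdn : ∀ u : ℝ, HasDerivAt dn (-(k^2 * sn u * cn u)) u) :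
    ∀ t ∈ Set.Icc (0:ℝ) (ellK k),
      sn (ellK k - t) = cn t / dn t ∧ cn (ellK k - t) = Real.sqrt (1-k^2) * sn t / dn t ∧
      dn (ellK k - t) = Real.sqrt (1-k^2) / dn t := by
  have hk2 : (0:ℝ) < 1 - k^2 := by nlinarith
  have hkp_pos : 0 < Real.sqrt (1-k^2) := Real.sqrt_pos.mpr hk2
  have hkp2 : Real.sqrt (1-k^2)^2 = 1-k^2 := Real.sq_sqrt hk2.le
  have hkp_le : Real.sqrt (1-k^2) ≤ 1 := by nlinarith
  have hdnp := dn_pos hk1 hk0 hsn0 hcn0 hdn0 hsn hcn hdn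
  have hdng := dn_ge hk1 hk0 hsn0 hcn0 hdn0 hsn hcn hdn
  have hpy := pyth hsn0 hcn0 hsn hcn
  have hds := dnsq hsn0 hdn0 hsn hdn
  have hsn1 : ∀ u, |sn u| ≤ 1 := fun u =>
    abs_le.mpr ⟨by nlinarith [hpy u, sq_nonneg (cn u)], by nlinarith [hpy u, sq_nonneg (cn u)]⟩
  have hcn1 : ∀ u, |cn u| ≤ 1 := fun u =>
    abs_le.mpr ⟨by nlinarith [hpy u, sq_nonneg (sn u)], by nlinarith [hpy u, sq_nonneg (sn u)]⟩
  have hdn1 : ∀ u, |dn u| ≤ 1 := fun u =>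
    abs_le.mpr ⟨by nlinarith [hds u, hdnp u, sq_nonneg (sn u)],
      by nlinarith [hds u, hdnp u, sq_nonneg (k * sn u)]⟩
  set kp := Real.sqrt (1-k^2) with hkpdef
  set R : ℝ := 1/kp with hRdef
  have hR1 : 1 ≤ R := by
    rw [hRdef]
    rw [le_div_iff₀ hkp_pos]
    simpa using hkp_le
  have hR0 : 0 < R := lt_of_lt_of_le one_pos hR1
  -- the vector field
  set v : ℝ → ℝ × ℝ × ℝ → ℝ × ℝ × ℝ :=
    fun _ p => (-(p.2.1 * p.2.2), p.1 * p.2.2, k^2 * (p.1 * p.2.1)) with hvdef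
  set s : ℝ → Set (ℝ × ℝ × ℝ) :=
    fun _ => {p : ℝ × ℝ × ℝ | |p.1| ≤ R ∧ |p.2.1| ≤ R ∧ |p.2.2| ≤ R} with hsdef
  have hLip : ∀ t, LipschitzOnWith (Real.toNNReal (2*R)) (v t) (s t) := by
    intro t
    apply LipschitzOnWith.of_dist_le_mul
    rintro p ⟨hp1, hp2, hp3⟩ q ⟨hq1, hq2, hq3⟩
    have hd1 : dist p.1 q.1 ≤ dist p q := le_trans (le_max_left _ _) (le_of_eq (Prod.dist_eq).symm)
    have hd2 : dist p.2.1 q.2.1 ≤ dist p q := by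
      rw [Prod.dist_eq]
      exact le_trans (le_trans (le_max_left _ _) (le_of_eq (Prod.dist_eq).symm)) (le_max_right _ _)
    have hd3 : dist p.2.2 q.2.2 ≤ dist p q := by
      rw [Prod.dist_eq]
      exact le_trans (le_trans (le_max_right _ _) (le_of_eq (Prod.dist_eq).symm)) (le_max_right _ _)
    have hdnn : (0:ℝ) ≤ dist p q := dist_nonneg
    have key : ∀ a b a' b' : ℝ, |a| ≤ R → |b'| ≤ R → |a - a'| ≤ dist p q → |b - b'| ≤ dist p q →
        |a * b - a' * b'| ≤ 2 * R * dist p q := by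
      intro a b a' b' ha hb' haa hbb
      have : a * b - a' * b' = a * (b - b') + b' * (a - a') := by ring
      rw [this]
      refine le_trans (abs_add_le _ _) ?_
      rw [abs_mul, abs_mul]
      have h1 : |a| * |b - b'| ≤ R * dist p q :=
        mul_le_mul ha hbb (abs_nonneg _) hR0.le
      have h2 : |b'| * |a - a'| ≤ R * dist p q :=
        mul_le_mul hb' haa (abs_nonneg _) hR0.le
      linarith
    rw [Real.coe_toNNReal _ (by positivity)]
    rw [Prod.dist_eq, Prod.dist_eq]
    simp only [Real.dist_eq] at *
    apply max_le
    · have : -(p.2.1 * p.2.2) - -(q.2.1 * q.2.2) = -(p.2.1 * p.2.2 - q.2.1 * q.2.2) := by ring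
      rw [this, abs_neg]
      exact key _ _ _ _ hp2 hq3 hd2 hd3
    apply max_le
    · exact key _ _ _ _ hp1 hq3 hd1 hd3
    · have : k^2 * (p.1 * p.2.1) - k^2 * (q.1 * q.2.1) = k^2 * (p.1 * p.2.1 - q.1 * q.2.1) := by
        ring
      rw [this, abs_mul]
      refine le_trans (mul_le_mul (by rw [abs_of_nonneg (sq_nonneg k)]; nlinarith : |k^2| ≤ 1)
        (key _ _ _ _ hp1 hq2 hd1 hd2) (abs_nonneg _) one_pos.le) ?_
      linarith [key p.1 p.2.1 q.1 q.2.1 hp1 hq2 hd1 hd2]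
  set f : ℝ → ℝ × ℝ × ℝ :=
    fun t => (sn (ellK k - t), cn (ellK k - t), dn (ellK k - t)) with hfdef
  set g : ℝ → ℝ × ℝ × ℝ :=
    fun t => (cn t / dn t, kp * sn t / dn t, kp / dn t) with hgdef
  have hsncont : Continuous sn := by
    have h : Differentiable ℝ sn := fun x => (hsn x).differentiableAt
    exact h.continuous
  have hcncont : Continuous cn := by
    have h : Differentiable ℝ cn := fun x => (hcn x).differentiableAt
    exact h.continuous
  have hdncont : Continuous dn := by
    have h : Differentiable ℝ dn := fun x => (hdn x).differentiableAt
    exact h.continuous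
  have hKt : ∀ t : ℝ, HasDerivAt (fun t : ℝ => ellK k - t) (-1) t := by
    intro t
    simpa using (hasDerivAt_const t (ellK k)).fun_sub (hasDerivAt_id t)
  have hsub : Continuous (fun t : ℝ => ellK k - t) := continuous_const.sub continuous_id
  have hf' : ∀ t, HasDerivAt f (v t (f t)) t := by
    intro t
    have h1 : HasDerivAt (fun t => sn (ellK k - t))
        (-(cn (ellK k - t) * dn (ellK k - t))) t := by
      have := (hsn (ellK k - t)).comp t (hKt t)
      exact this.congr_deriv (by ring)
    have h2 : HasDerivAt (fun t => cn (ellK k - t))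
        (sn (ellK k - t) * dn (ellK k - t)) t := by
      have := (hcn (ellK k - t)).comp t (hKt t)
      exact this.congr_deriv (by ring)
    have h3 : HasDerivAt (fun t => dn (ellK k - t))
        (k^2 * (sn (ellK k - t) * cn (ellK k - t))) t := by
      have := (hdn (ellK k - t)).comp t (hKt t)
      exact this.congr_deriv (by ring)
    exact h1.prodMk (h2.prodMk h3)
  have hg' : ∀ t, HasDerivAt g (v t (g t)) t := by
    intro t
    have hne := (hdnp t).ne'
    have h1 : HasDerivAt (fun t => cn t / dn t)
        (-((kp * sn t / dn t) * (kp / dn t))) t := by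
      have hthis := (hcn t).div (hdn t) hne
      have heq : (-(sn t * dn t) * dn t - cn t * -(k ^ 2 * sn t * cn t)) / dn t ^ 2
          = -(kp * sn t / dn t * (kp / dn t)) := by
        have hnum : -(sn t * dn t) * dn t - cn t * -(k ^ 2 * sn t * cn t) = -(kp^2 * sn t) := by
          linear_combination (-(sn t)) * hds t + (k^2 * sn t) * hpy t + (sn t) * hkp2
        rw [hnum]
        field_simp
      rw [heq] at hthis
      exact hthis
    have h2 : HasDerivAt (fun t => kp * sn t / dn t)
        ((cn t / dn t) * (kp / dn t)) t := by
      have hthis := ((hasDerivAt_const t kp).fun_mul (hsn t)).fun_div (hdn t) hne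
      have heq : ((0 * sn t + kp * (cn t * dn t)) * dn t - kp * sn t * -(k ^ 2 * sn t * cn t))
          / dn t ^ 2 = cn t / dn t * (kp / dn t) := by
        have hnum : (0 * sn t + kp * (cn t * dn t)) * dn t - kp * sn t * -(k ^ 2 * sn t * cn t)
            = kp * cn t := by
          linear_combination (kp * cn t) * hds t
        rw [hnum]
        field_simp
      rw [heq] at hthis
      exact hthis
    have h3 : HasDerivAt (fun t => kp / dn t)
        (k^2 * ((cn t / dn t) * (kp * sn t / dn t))) t := by
      have := (hasDerivAt_const t kp).fun_div (hdn t) hne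
      exact this.congr_deriv (by field_simp; ring)
    exact h1.prodMk (h2.prodMk h3)
  have hfmem : ∀ t, f t ∈ s t := by
    intro t
    refine ⟨le_trans (hsn1 _) hR1, le_trans (hcn1 _) hR1, le_trans (hdn1 _) hR1⟩
  have habsdiv : ∀ (a : ℝ) (u : ℝ), |a| ≤ 1 → |a / dn u| ≤ R := by
    intro a u ha
    rw [abs_div, abs_of_pos (hdnp u), hRdef]
    exact div_le_div₀ zero_le_one ha hkp_pos (hdng u)
  have hgmem : ∀ t, g t ∈ s t := by
    intro t
    refine ⟨habsdiv _ _ (hcn1 t), ?_, ?_⟩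
    · have : |kp * sn t| ≤ 1 := by
        rw [abs_mul, abs_of_pos hkp_pos]
        calc kp * |sn t| ≤ 1 * 1 := mul_le_mul hkp_le (hsn1 t) (abs_nonneg _) one_pos.le
        _ = 1 := by ring
      exact habsdiv _ _ this
    · exact habsdiv _ _ (by rw [abs_of_pos hkp_pos]; exact hkp_le)
  have hinit : f 0 = g 0 := by
    obtain ⟨hs, hc, hd⟩ := sn_ellK hk1 hk0 hsn0 hcn0 hdn0 hsn hcn hdn
    rw [hfdef, hgdef]
    simp only [sub_zero, hsn0, hcn0, hdn0, hs, hc, hd]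
    norm_num
    rfl
  have hcontf : ContinuousOn f (Set.Icc 0 (ellK k)) :=
    (((hsncont.comp hsub).prodMk
      ((hcncont.comp hsub).prodMk (hdncont.comp hsub)))).continuousOn
  have hcontg : ContinuousOn g (Set.Icc 0 (ellK k)) := by
    have hne : ∀ x : ℝ, dn x ≠ 0 := fun x => (hdnp x).ne'
    exact ((hcncont.div hdncont hne).prodMk
      (((continuous_const.mul hsncont).div hdncont hne).prodMk
        (continuous_const.div hdncont hne))).continuousOn
  have heq := ODE_solution_unique_of_mem_Icc_right (fun t _ => hLip t) hcontf
    (fun t _ => (hf' t).hasDerivWithinAt) (fun t _ => hfmem t) hcontg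
    (fun t _ => (hg' t).hasDerivWithinAt) (fun t _ => hgmem t) hinit
  intro t ht
  have := heq ht
  rw [hfdef, hgdef] at this
  simp only [Prod.mk.injEq] at this
  exact ⟨this.1, this.2.1, this.2.2⟩

end Aux6

section Aux7
variable {k : ℝ} {sn cn dn : ℝ → ℝ}

theorem int_dnsq (hk1 : k < 1) (hk0 : 0 < k) (hsn0 : sn 0 = 0) (hcn0 : cn 0 = 1) (hdn0 : dn 0 = 1)
    (hsn : ∀ u : ℝ, HasDerivAt sn (cn u * dn u) u)
    (hcn : ∀ u : ℝ, HasDerivAt cn (-(sn u * dn u)) u)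
    (hdn : ∀ u : ℝ, HasDerivAt dn (-(k^2 * sn u * cn u)) u) :
    (∫ v in (0:ℝ)..(ellK k), dn v ^ 2) = ellE k := by
  have hdncont : Continuous dn := by
    have h : Differentiable ℝ dn := fun x => (hdn x).differentiableAt
    exact h.continuous
  have hg : Continuous fun θ : ℝ => Real.sqrt (1 - k^2 * Real.sin θ ^ 2) :=
    (continuous_const.sub (continuous_const.mul (Real.continuous_sin.pow 2))).sqrt
  have h := intervalIntegral.integral_comp_smul_deriv
    (f := fun u => ∫ v in (0:ℝ)..u, dn v) (f' := dn)
    (g := fun θ => Real.sqrt (1 - k^2 * Real.sin θ ^ 2)) (a := 0) (b := ellK k)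
    (fun x _ => phi_deriv (sn := sn) (cn := cn) hdn x) hdncont.continuousOn hg
  have hl : (fun x => dn x • (fun θ => Real.sqrt (1 - k^2 * Real.sin θ ^ 2))
      ((fun u => ∫ v in (0:ℝ)..u, dn v) x)) = fun x => dn x ^ 2 := by
    funext x
    have := dn_eq_sqrt hk1 hk0 hsn0 hcn0 hdn0 hsn hcn hdn x
    simp only [smul_eq_mul]
    rw [← this]
    ring
  rw [show (fun x => dn x • ((fun θ => Real.sqrt (1 - k^2 * Real.sin θ ^ 2)) ∘
    (fun u => ∫ v in (0:ℝ)..u, dn v)) x) = fun x => dn x ^ 2 from hl] at h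
  rw [h]
  simp only [intervalIntegral.integral_same]
  rw [phi_ellK hk1 hk0 hsn0 hcn0 hdn0 hsn hcn hdn]
  rfl

end Aux7

section Aux8
variable {k : ℝ} {sn cn dn : ℝ → ℝ}

theorem q_deriv (hk1 : k < 1) (hk0 : 0 < k) (hsn0 : sn 0 = 0) (hcn0 : cn 0 = 1) (hdn0 : dn 0 = 1)
    (hsn : ∀ u : ℝ, HasDerivAt sn (cn u * dn u) u)
    (hcn : ∀ u : ℝ, HasDerivAt cn (-(sn u * dn u)) u)
    (hdn : ∀ u : ℝ, HasDerivAt dn (-(k^2 * sn u * cn u)) u) (u : ℝ) :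
    HasDerivAt (fun u => k^2 * sn u * cn u / dn u) (dn u^2 - (1-k^2)/dn u^2) u := by
  have hne := (dn_pos hk1 hk0 hsn0 hcn0 hdn0 hsn hcn hdn u).ne'
  have hpy := pyth hsn0 hcn0 hsn hcn u
  have hds := dnsq hsn0 hdn0 hsn hdn u
  have h := (((hasDerivAt_const u (k^2)).fun_mul (hsn u)).fun_mul (hcn u)).fun_div (hdn u) hne
  have hnum : ((0 * sn u + k ^ 2 * (cn u * dn u)) * cn u + k ^ 2 * sn u * -(sn u * dn u)) * dn u
      - k ^ 2 * sn u * cn u * -(k ^ 2 * sn u * cn u) = dn u^2 * dn u^2 - (1-k^2) := by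
    linear_combination (k^2*dn u^2 + k^4*sn u^2) * hpy + (-dn u^2 + k^2 - k^2*sn u^2 - 1) * hds
  have heq : (((0 * sn u + k ^ 2 * (cn u * dn u)) * cn u + k ^ 2 * sn u * -(sn u * dn u)) * dn u
      - k ^ 2 * sn u * cn u * -(k ^ 2 * sn u * cn u)) / dn u ^ 2
      = dn u^2 - (1-k^2)/dn u^2 := by
    rw [hnum]
    field_simp
  rw [heq] at h
  exact h

theorem G_deriv (hk1 : k < 1) (hk0 : 0 < k) (hsn0 : sn 0 = 0) (hcn0 : cn 0 = 1) (hdn0 : dn 0 = 1)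
    (hsn : ∀ u : ℝ, HasDerivAt sn (cn u * dn u) u)
    (hcn : ∀ u : ℝ, HasDerivAt cn (-(sn u * dn u)) u)
    (hdn : ∀ u : ℝ, HasDerivAt dn (-(k^2 * sn u * cn u)) u) (u : ℝ) :
    HasDerivAt (fun u => 2 * ((∫ v in (0:ℝ)..u, (dn v)^2) - u * ellE k / ellK k)
        - k^2 * sn u * cn u / dn u)
      (2 * (dn u^2 - ellE k / ellK k) - (dn u^2 - (1-k^2)/dn u^2)) u := by
  have hdncont : Continuous fun v => dn v ^ 2 := by
    have h : Differentiable ℝ dn := fun x => (hdn x).differentiableAt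
    exact h.continuous.pow 2
  have hI : HasDerivAt (fun u => ∫ v in (0:ℝ)..u, (dn v)^2) (dn u^2) u :=
    (hdncont.integral_hasStrictDerivAt 0 u).hasDerivAt
  have hlin : HasDerivAt (fun u : ℝ => u * ellE k / ellK k) (1 * ellE k / ellK k) u :=
    ((hasDerivAt_id u).mul_const (ellE k)).div_const (ellK k)
  have h := ((hI.fun_sub hlin).const_mul 2).fun_sub
    (q_deriv hk1 hk0 hsn0 hcn0 hdn0 hsn hcn hdn u)
  exact h.congr_deriv (by ring)

theorem prod_eq (k : ℝ) (hk1 : k < 1) (hk0 : 0 < k) (a b : ℝ) :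
    (a + Real.sqrt (1-k^2) * b) * (a - Real.sqrt (1-k^2) * b) = a^2 - (1-k^2)*b^2 := by
  have hkp2 : Real.sqrt (1-k^2)^2 = 1-k^2 := Real.sq_sqrt (by nlinarith)
  linear_combination (-(b^2)) * hkp2

theorem G2_deriv (hk1 : k < 1) (hk0 : 0 < k) (hsn0 : sn 0 = 0) (hcn0 : cn 0 = 1) (hdn0 : dn 0 = 1)
    (hsn : ∀ u : ℝ, HasDerivAt sn (cn u * dn u) u)
    (hcn : ∀ u : ℝ, HasDerivAt cn (-(sn u * dn u)) u)
    (hdn : ∀ u : ℝ, HasDerivAt dn (-(k^2 * sn u * cn u)) u) (u : ℝ) :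
    HasDerivAt (fun u => 2 * (dn u^2 - ellE k / ellK k) - (dn u^2 - (1-k^2)/dn u^2))
      (-(2 * k^4 * sn u * cn u / (dn u)^3) *
        ((cn u * dn u + Real.sqrt (1 - k^2) * sn u) *
          (cn u * dn u - Real.sqrt (1 - k^2) * sn u))) u := by
  have hdp := dn_pos hk1 hk0 hsn0 hcn0 hdn0 hsn hcn hdn u
  have hne := hdp.ne'
  have hne2 : dn u ^ 2 ≠ 0 := pow_ne_zero 2 hne
  have hpy := pyth hsn0 hcn0 hsn hcn u
  have hds := dnsq hsn0 hdn0 hsn hdn u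
  have hd2 : HasDerivAt (fun u => dn u ^ 2) ((2:ℕ) * dn u ^ 1 * -(k^2 * sn u * cn u)) u :=
    (hdn u).pow 2
  have hinv : HasDerivAt (fun u => (1-k^2)/dn u^2)
      ((0 * dn u ^ 2 - (1-k^2) * ((2:ℕ) * dn u ^ 1 * -(k^2 * sn u * cn u))) / (dn u ^ 2) ^ 2) u :=
    (hasDerivAt_const u (1-k^2)).fun_div hd2 hne2
  have h := ((hd2.sub_const (ellE k / ellK k)).const_mul 2).fun_sub (hd2.fun_sub hinv)
  refine h.congr_deriv ?_
  rw [prod_eq k hk1 hk0 (cn u * dn u) (sn u)]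
  field_simp
  linear_combination (2*k^2*sn u*cn u*k^2*dn u^2) * hpy +
    (-2*k^2*sn u*cn u*(dn u^2+1-k^2)) * hds
end Aux8

section Aux9
variable {k : ℝ} {sn cn dn : ℝ → ℝ}

theorem G_half (hk1 : k < 1) (hk0 : 0 < k) (hsn0 : sn 0 = 0) (hcn0 : cn 0 = 1) (hdn0 : dn 0 = 1)
    (hsn : ∀ u : ℝ, HasDerivAt sn (cn u * dn u) u)
    (hcn : ∀ u : ℝ, HasDerivAt cn (-(sn u * dn u)) u)
    (hdn : ∀ u : ℝ, HasDerivAt dn (-(k^2 * sn u * cn u)) u) :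
    2 * ((∫ v in (0:ℝ)..(ellK k/2), (dn v)^2) - (ellK k/2) * ellE k / ellK k)
      - k^2 * sn (ellK k/2) * cn (ellK k/2) / dn (ellK k/2) = 0 := by
  have hk2 : (0:ℝ) < 1 - k^2 := by nlinarith
  have hKpos := ellK_pos hk1 hk0
  have hKne : ellK k ≠ 0 := hKpos.ne'
  set h : ℝ → ℝ := fun u => ((∫ v in (0:ℝ)..u, (dn v)^2) - u * ellE k / ellK k)
    + ((∫ v in (0:ℝ)..(ellK k - u), (dn v)^2) - (ellK k - u) * ellE k / ellK k)
    - k^2 * sn u * cn u / dn u with hhdef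
  have hdncont : Continuous fun v => dn v ^ 2 := by
    have hdiff : Differentiable ℝ dn := fun x => (hdn x).differentiableAt
    exact hdiff.continuous.pow 2
  have hIder : ∀ x : ℝ, HasDerivAt (fun u => ∫ v in (0:ℝ)..u, (dn v)^2) (dn x^2) x :=
    fun x => (hdncont.integral_hasStrictDerivAt 0 x).hasDerivAt
  have hKt : ∀ t : ℝ, HasDerivAt (fun t : ℝ => ellK k - t) (-1) t := by
    intro t
    simpa using (hasDerivAt_const t (ellK k)).fun_sub (hasDerivAt_id t)
  have hhd : ∀ u : ℝ, HasDerivAt h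
      ((dn u^2 - 1 * ellE k / ellK k) + (dn (ellK k - u)^2 * (-1) - (-1) * ellE k / ellK k)
        - (dn u^2 - (1-k^2)/dn u^2)) u := by
    intro u
    exact (((hIder u).sub (((hasDerivAt_id u).mul_const (ellE k)).div_const (ellK k))).fun_add
      (((hIder (ellK k - u)).comp u (hKt u)).fun_sub
        (((hKt u).mul_const (ellE k)).div_const (ellK k)))).fun_sub
      (q_deriv hk1 hk0 hsn0 hcn0 hdn0 hsn hcn hdn u)
  have hderiv0 : ∀ u ∈ Set.Icc (0:ℝ) (ellK k), deriv h u = 0 := by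
    intro u hu
    rw [(hhd u).deriv]
    rw [(sym hk1 hk0 hsn0 hcn0 hdn0 hsn hcn hdn u hu).2.2]
    rw [div_pow, Real.sq_sqrt hk2.le]
    ring
  have hdiffh : Differentiable ℝ h := fun u => (hhd u).differentiableAt
  have hconth : ContinuousOn h (Set.Icc 0 (ellK k)) := hdiffh.continuous.continuousOn
  have hmem0 : (0:ℝ) ∈ Set.Icc (0:ℝ) (ellK k) := ⟨le_refl 0, hKpos.le⟩
  have hmemh : ellK k / 2 ∈ Set.Icc (0:ℝ) (ellK k) := ⟨by linarith, by linarith⟩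
  have hmono := monotoneOn_of_deriv_nonneg (convex_Icc (0:ℝ) (ellK k)) hconth
    (hdiffh.differentiableOn) (fun x hx => by
      rw [hderiv0 x (interior_subset hx)])
  have hanti := antitoneOn_of_deriv_nonpos (convex_Icc (0:ℝ) (ellK k)) hconth
    (hdiffh.differentiableOn) (fun x hx => by
      rw [hderiv0 x (interior_subset hx)])
  have hval : h (ellK k / 2) = h 0 :=
    le_antisymm (hanti hmem0 hmemh (by linarith)) (hmono hmem0 hmemh (by linarith))
  have h0 : h 0 = 0 := by
    rw [hhdef]
    simp only [intervalIntegral.integral_same, sub_zero]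
    rw [int_dnsq hk1 hk0 hsn0 hcn0 hdn0 hsn hcn hdn, hsn0, hcn0, hdn0]
    field_simp
    ring
  have hhalf : h (ellK k / 2) =
      2 * ((∫ v in (0:ℝ)..(ellK k/2), (dn v)^2) - (ellK k/2) * ellE k / ellK k)
        - k^2 * sn (ellK k/2) * cn (ellK k/2) / dn (ellK k/2) := by
    rw [hhdef]
    simp only []
    rw [show ellK k - ellK k/2 = ellK k/2 by ring]
    ring
  rw [← hhalf, hval, h0]

end Aux9

theorem g_second_deriv_neg (k : ℝ) (hk0 : 0 < k) (hk1 : k < 1)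
    (sn cn dn : ℝ → ℝ)
    (hsn0 : sn 0 = 0) (hcn0 : cn 0 = 1) (hdn0 : dn 0 = 1)
    (hsn : ∀ u : ℝ, HasDerivAt sn (cn u * dn u) u)
    (hcn : ∀ u : ℝ, HasDerivAt cn (-(sn u * dn u)) u)
    (hdn : ∀ u : ℝ, HasDerivAt dn (-(k^2 * sn u * cn u)) u) :
    (fun u => 2 * ((∫ v in (0:ℝ)..u, (dn v)^2) - u * ellE k / ellK k)
        - k^2 * sn u * cn u / dn u) 0 = 0 ∧
    (fun u => 2 * ((∫ v in (0:ℝ)..u, (dn v)^2) - u * ellE k / ellK k)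
        - k^2 * sn u * cn u / dn u) (ellK k / 2) = 0 ∧
    (∀ u ∈ Set.Ioo 0 (ellK k / 2),
      deriv (deriv (fun u => 2 * ((∫ v in (0:ℝ)..u, (dn v)^2) - u * ellE k / ellK k)
          - k^2 * sn u * cn u / dn u)) u =
        -(2 * k^4 * sn u * cn u / (dn u)^3) *
          ((cn u * dn u + Real.sqrt (1 - k^2) * sn u) *
            (cn u * dn u - Real.sqrt (1 - k^2) * sn u)) ∧
      deriv (deriv (fun u => 2 * ((∫ v in (0:ℝ)..u, (dn v)^2) - u * ellE k / ellK k)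
          - k^2 * sn u * cn u / dn u)) u < 0) ∧
    ∀ u ∈ Set.Ioo 0 (ellK k / 2),
      0 < 2 * ((∫ v in (0:ℝ)..u, (dn v)^2) - u * ellE k / ellK k)
        - k^2 * sn u * cn u / dn u := by
  have hk2 : (0:ℝ) < 1 - k^2 := by nlinarith
  have hkp_pos : 0 < Real.sqrt (1-k^2) := Real.sqrt_pos.mpr hk2
  have hkp2 : Real.sqrt (1-k^2)^2 = 1-k^2 := Real.sq_sqrt hk2.le
  have hKpos := ellK_pos hk1 hk0
  have hdp := dn_pos hk1 hk0 hsn0 hcn0 hdn0 hsn hcn hdn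
  set G : ℝ → ℝ := fun u => 2 * ((∫ v in (0:ℝ)..u, (dn v)^2) - u * ellE k / ellK k)
    - k^2 * sn u * cn u / dn u with hGdef
  have hGd : ∀ u : ℝ, HasDerivAt G
      (2 * (dn u^2 - ellE k / ellK k) - (dn u^2 - (1-k^2)/dn u^2)) u :=
    fun u => G_deriv hk1 hk0 hsn0 hcn0 hdn0 hsn hcn hdn u
  have part1 : G 0 = 0 := by
    rw [hGdef]
    simp [hsn0, intervalIntegral.integral_same]
  have part2 : G (ellK k / 2) = 0 :=
    G_half hk1 hk0 hsn0 hcn0 hdn0 hsn hcn hdn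
  have hderivG : deriv G = fun u => 2 * (dn u^2 - ellE k / ellK k)
      - (dn u^2 - (1-k^2)/dn u^2) := funext fun u => (hGd u).deriv
  -- w is strictly decreasing, with w (K/2) = 0
  have hwd : ∀ x : ℝ, HasDerivAt (fun u => cn u * dn u - Real.sqrt (1-k^2) * sn u)
      ((-(sn x * dn x) * dn x + cn x * -(k^2 * sn x * cn x))
        - (0 * sn x + Real.sqrt (1-k^2) * (cn x * dn x))) x :=
    fun x => ((hcn x).fun_mul (hdn x)).fun_sub ((hasDerivAt_const x _).fun_mul (hsn x))
  have hsncn : ∀ u : ℝ, 0 < u → u < ellK k → 0 < sn u ∧ 0 < cn u :=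
    fun u h1 h2 => sncn_pos hk1 hk0 hsn0 hcn0 hdn0 hsn hcn hdn h1 h2
  have hanti : StrictAntiOn (fun u => cn u * dn u - Real.sqrt (1-k^2) * sn u)
      (Set.Icc 0 (ellK k / 2)) := by
    apply strictAntiOn_of_deriv_neg (convex_Icc _ _)
    · exact (Differentiable.continuous (fun x => (hwd x).differentiableAt)).continuousOn
    · intro x hx
      rw [interior_Icc] at hx
      rw [(hwd x).deriv]
      obtain ⟨hs, hc⟩ := hsncn x hx.1 (by linarith [hx.2])
      nlinarith [mul_pos (mul_pos hs (hdp x)) (hdp x), mul_pos hkp_pos (mul_pos hc (hdp x)),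
        mul_pos (mul_pos (mul_pos hk0 hk0) hs) (mul_pos hc hc)]
  have hwhalf : cn (ellK k/2) * dn (ellK k/2) - Real.sqrt (1-k^2) * sn (ellK k/2) = 0 := by
    have hmem : ellK k / 2 ∈ Set.Icc (0:ℝ) (ellK k) := ⟨by linarith, by linarith⟩
    have := (sym hk1 hk0 hsn0 hcn0 hdn0 hsn hcn hdn (ellK k/2) hmem).2.1
    rw [show ellK k - ellK k/2 = ellK k/2 by ring] at this
    rw [this]
    have hne := (hdp (ellK k/2)).ne'
    field_simp
    ring
  have hwpos : ∀ u ∈ Set.Ioo (0:ℝ) (ellK k / 2),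
      0 < cn u * dn u - Real.sqrt (1-k^2) * sn u := by
    intro u hu
    have h1 := hanti (Set.mem_Icc.mpr ⟨hu.1.le, hu.2.le⟩)
      (Set.mem_Icc.mpr ⟨by linarith, le_refl _⟩) hu.2
    simp only [] at h1
    rw [hwhalf] at h1
    exact h1
  have part3 : ∀ u ∈ Set.Ioo (0:ℝ) (ellK k / 2),
      deriv (deriv G) u =
        -(2 * k^4 * sn u * cn u / (dn u)^3) *
          ((cn u * dn u + Real.sqrt (1 - k^2) * sn u) *
            (cn u * dn u - Real.sqrt (1 - k^2) * sn u)) ∧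
      deriv (deriv G) u < 0 := by
    intro u hu
    have hform : deriv (deriv G) u =
        -(2 * k^4 * sn u * cn u / (dn u)^3) *
          ((cn u * dn u + Real.sqrt (1 - k^2) * sn u) *
            (cn u * dn u - Real.sqrt (1 - k^2) * sn u)) := by
      rw [hderivG]
      exact (G2_deriv hk1 hk0 hsn0 hcn0 hdn0 hsn hcn hdn u).deriv
    refine ⟨hform, ?_⟩
    rw [hform]
    obtain ⟨hs, hc⟩ := hsncn u hu.1 (by linarith [hu.2])
    have hA : 0 < 2 * k^4 * sn u * cn u / (dn u)^3 := by
      apply div_pos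
      · nlinarith [mul_pos hs hc, pow_pos hk0 4]
      · exact pow_pos (hdp u) 3
    have hB : 0 < cn u * dn u + Real.sqrt (1 - k^2) * sn u := by
      nlinarith [mul_pos hc (hdp u), mul_pos hkp_pos hs]
    have hC := hwpos u hu
    nlinarith [mul_pos hA (mul_pos hB hC)]
  refine ⟨part1, part2, part3, ?_⟩
  -- concavity
  have hcontG : Continuous G := Differentiable.continuous (fun x => (hGd x).differentiableAt)
  have hconc : StrictConcaveOn ℝ (Set.Icc 0 (ellK k / 2)) G := by
    apply strictConcaveOn_of_deriv2_neg (convex_Icc _ _) hcontG.continuousOn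
    intro x hx
    rw [interior_Icc] at hx
    show deriv^[2] G x < 0
    rw [show (2:ℕ) = 1+1 from rfl, Function.iterate_succ_apply, Function.iterate_one]
    exact (part3 x hx).2
  intro u hu
  obtain ⟨hu0, hu2⟩ := hu
  have hne : (0:ℝ) ≠ ellK k / 2 := by linarith
  have ha : 0 < 1 - u/(ellK k/2) := by
    have : u / (ellK k/2) < 1 := (div_lt_one (by linarith)).mpr hu2
    linarith
  have hb : 0 < u/(ellK k/2) := div_pos hu0 (by linarith)
  have hkey := hconc.2 (Set.mem_Icc.mpr ⟨le_refl _, by linarith⟩)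
    (Set.mem_Icc.mpr ⟨by linarith, le_refl _⟩) hne ha hb (by ring)
  rw [part1, part2] at hkey
  simp only [smul_eq_mul, mul_zero, add_zero, zero_add] at hkey
  rw [show u/(ellK k/2)*(ellK k/2) = u from div_mul_cancel₀ u (by linarith)] at hkey
  exact hkey
end

section
/- Let −1 < α < β < 1 with α + β ≥ 0. Then √k'/(1+k') ≥ (1/2)·√(1−β²), where k'² = (1+α)(1−β)/((1−α)(1+β)); i.e., the lower bound √k'/(1+k') for cap([−1,α]∪[β,1]) is at least the trivial lower bound cap([−1,−β]∪[β,1]) = (1/2)√(1−β²). -/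
open Real

theorem lower_bound_comparison (α β : ℝ) (hα : -1 < α) (hαβ : α < β) (hβ : β < 1)
    (hab : 0 ≤ α + β) :
    Real.sqrt (Real.sqrt ((1+α)*(1-β)/((1-α)*(1+β)))) /
        (1 + Real.sqrt ((1+α)*(1-β)/((1-α)*(1+β)))) ≥
      (1/2) * Real.sqrt (1 - β^2) := by
  have hβα : α < 1 := hαβ.trans hβ
  have hβ1 : -1 < β := hα.trans hαβ
  have ha : (0:ℝ) < (1+α)*(1-β) := by nlinarith
  have hb : (0:ℝ) < (1-α)*(1+β) := by nlinarith
  set r : ℝ := (1+α)*(1-β)/((1-α)*(1+β)) with hr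
  have hr0 : 0 < r := div_pos ha hb
  set t : ℝ := Real.sqrt r with htdef
  have ht0 : 0 < t := Real.sqrt_pos.mpr hr0
  have ht2 : t^2 = r := Real.sq_sqrt hr0.le
  have hβsq : 0 < 1 - β^2 := by nlinarith
  have hpoly : (1-β^2)*(1-α*β)^2 ≤ (1-α^2)*(1+β^2)^2 := by
    have hβ0 : 0 < β := by linarith
    have h2 : 0 ≤ (1+3*β^2)*(β-α)+2*β*(1-β^2) := by nlinarith
    nlinarith [mul_nonneg hab h2]
  -- √(A·B) = t·B
  have hsAB : Real.sqrt ((1+α)*(1-β) * ((1-α)*(1+β))) = t * ((1-α)*(1+β)) := by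
    rw [show (1+α)*(1-β)*((1-α)*(1+β)) = ((1+α)*(1-β)/((1-α)*(1+β))) * ((1-α)*(1+β))^2 by
      field_simp, Real.sqrt_mul (le_of_lt (div_pos ha hb)), Real.sqrt_sq hb.le, htdef, hr]
  -- 2(1-β²)(1-αβ) ≤ √(AB)·(1+β²)
  have hαβ1 : 0 < 1 - α*β := by nlinarith
  have hs2 : 2*((1-β^2)*(1-α*β)) ≤ Real.sqrt ((1+α)*(1-β) * ((1-α)*(1+β))) * (2*(1+β^2)) := by
    have hx : 2*((1-β^2)*(1-α*β)) / (2*(1+β^2)) ≤ Real.sqrt ((1+α)*(1-β) * ((1-α)*(1+β))) := by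
      rw [Real.le_sqrt (by positivity) (by positivity)]
      rw [div_pow, div_le_iff₀ (by positivity)]
      nlinarith [mul_le_mul_of_nonneg_left hpoly hβsq.le]
    calc 2*((1-β^2)*(1-α*β)) = 2*((1-β^2)*(1-α*β)) / (2*(1+β^2)) * (2*(1+β^2)) := by
          field_simp
      _ ≤ Real.sqrt ((1+α)*(1-β) * ((1-α)*(1+β))) * (2*(1+β^2)) := by
          apply mul_le_mul_of_nonneg_right hx (by positivity)
  -- key: (1-β²)(1+r) ≤ t(2+2β²)
  have hkey : (1-β^2)*(1+r) ≤ t*(2+2*β^2) := by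
    rw [hsAB] at hs2
    have h1r : (1+r) * ((1-α)*(1+β)) = 2*(1-α*β) := by
      rw [hr]; rw [show (1 + (1+α)*(1-β)/((1-α)*(1+β))) * ((1-α)*(1+β)) = (1-α)*(1+β) + (1+α)*(1-β)/((1-α)*(1+β)) * ((1-α)*(1+β)) by ring, div_mul_cancel₀ _ hb.ne']; ring
    have := mul_le_mul_of_nonneg_left hs2 (le_of_lt (inv_pos.mpr hb))
    rw [← mul_le_mul_iff_of_pos_right hb]
    calc (1-β^2)*(1+r) * ((1-α)*(1+β)) = (1-β^2) * (2*(1-α*β)) := by rw [mul_assoc, h1r]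
      _ = 2*((1-β^2)*(1-α*β)) := by ring
      _ ≤ t * ((1-α)*(1+β)) * (2*(1+β^2)) := hs2
      _ = t*(2+2*β^2) * ((1-α)*(1+β)) := by ring
  have hmain : (1 - β^2)/4 ≤ t/(1+t)^2 := by
    rw [div_le_div_iff₀ (by norm_num) (by positivity)]
    nlinarith [ht2, ht0.le, hkey]
  have e1 : (1/2) * Real.sqrt (1-β^2) = Real.sqrt ((1-β^2)/4) := by
    rw [show (1-β^2)/4 = (1-β^2) * (1/2)^2 by ring,
      Real.sqrt_mul hβsq.le, Real.sqrt_sq (by norm_num)]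
    ring
  have e2 : Real.sqrt (t/(1+t)^2) = Real.sqrt t / (1+t) := by
    rw [Real.sqrt_div ht0.le, Real.sqrt_sq (by positivity)]
  rw [ge_iff_le, e1, ← e2]
  exact Real.sqrt_le_sqrt hmain
end
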